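/- arXiv:2101.00025 — 4 statements merged into one kernel-verified Lean document; each statement's English description precedes it below -/
import Mathlib

section
/- Let s ≥ 32, let T₁ ≥ 0, and define Λ₂(t) = α(t) + δ(t)/16 + β(t)/4. Assume that Λ₂(T₁) ≤ 1 and that for all t ≥ T₁ the variables satisfy α(t) ≥ 0, δ(t) ≥ 0, β_j(t) ≥ 0 for all 1 ≤ j ≤ 8s, 1 − 2/s ≤ Γ(t) ≤ 1, R(t) ≥ 1 + 1/(4s), and β(t) ≤ 1/64. Then for all t ≥ T₁ and all 1 ≤ j ≤ 8s one has β_j(t) ≤ 4·e^{−(t−T₁)/(8s)} and β(t) ≤ 32s·e^{−(t−T₁)/(8s)}; in particular, β(t) ≤ 32s·e^{−8s} for all t ≥ T₁ + 64s². -/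
lemma arith_key (σ a d b G S : ℝ) (hσ : 32 ≤ σ)
    (ha : 0 ≤ a) (hd : 0 ≤ d) (hb : 0 ≤ b) (hb1 : b ≤ 1/64)
    (hG1 : 1 - 2/σ ≤ G) (hG2 : G ≤ 1)
    (hS : S ≤ (a/2) * G - b * (1/(4*σ))) :
    (-(a/2) * (G - b) + d * b)
      + ((a/2) * (G - b) + ((1/σ - a - d)/2) * b - d * G)/16
      + S/4 ≤ -(1/(8*σ) * (a + d/16 + b/4)) := by
  have hσ0 : (0:ℝ) < σ := by linarith
  have hinv : 1/σ ≤ 1/32 := by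
    rw [div_le_div_iff₀ hσ0 (by norm_num)]; linarith
  have hinv0 : (0:ℝ) < 1/σ := by positivity
  have he : σ * (1/σ) = 1 := by field_simp
  have h2 : 2/σ ≤ 2/32 := by
    apply div_le_div_of_nonneg_left (by norm_num) (by norm_num) hσ
  have hGb : (59:ℝ)/64 ≤ G - b := by linarith
  have hae : a * (1/σ) ≤ a * (1/32) := mul_le_mul_of_nonneg_left hinv ha
  have hde : d * (1/σ) ≤ d * (1/32) := mul_le_mul_of_nonneg_left hinv hd
  have haGb : a * (59/64) ≤ a * (G - b) := mul_le_mul_of_nonneg_left hGb ha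
  have haG : a * G ≤ a * 1 := mul_le_mul_of_nonneg_left hG2 ha
  have hdG : d * (1 - 2/32) ≤ d * G := mul_le_mul_of_nonneg_left (by linarith) hd
  have hdb : d * b ≤ d * (1/64) := mul_le_mul_of_nonneg_left hb1 hd
  have hab : 0 ≤ (a + d) * b := mul_nonneg (by linarith) hb
  have hrw1 : b * (1/(4*σ)) = b * (1/σ) / 4 := by ring
  have hrw2 : 1/(8*σ) * (a + d/16 + b/4) = (a * (1/σ) + d * (1/σ)/16 + b * (1/σ)/4)/8 := by
    field_simp
  nlinarith [hS, hae, hde, haGb, haG, hdG, hdb, hab]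

theorem stmt_14
    (s : ℕ) (hs : 32 ≤ s)
    (α δ : ℝ → ℝ) (β γ : ℕ → ℝ → ℝ) (B Γ u R : ℝ → ℝ)
    (hB : ∀ t, B t = ∑ j ∈ Finset.Icc 1 (8*s), β j t)
    (hΓ : ∀ t, Γ t = ∑ j ∈ Finset.Icc 1 (8*s), γ j t)
    (hu : ∀ t, u t = 1 - 1/(s:ℝ) - Γ t)
    (hR : ∀ t, R t = 1 + 1/(2*(s:ℝ)) - δ t / 2 - u t)
    (hderivα : ∀ t : ℝ, 0 ≤ t → HasDerivAt α (-(α t / 2) * (Γ t - B t) + δ t * B t) t)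
    (hderivδ : ∀ t : ℝ, 0 ≤ t →
      HasDerivAt δ ((α t / 2) * (Γ t - B t) + ((1/(s:ℝ) - α t - δ t)/2) * B t - δ t * Γ t) t)
    (hderivβ1 : ∀ t : ℝ, 0 ≤ t → HasDerivAt (β 1) (-(β 1 t) * R t + (α t / 2) * Γ t) t)
    (hderivβ : ∀ j, 2 ≤ j → j ≤ 8*s → ∀ t : ℝ, 0 ≤ t →
      HasDerivAt (β j) (β (j-1) t - β j t * R t) t)
    (hderivγ1 : ∀ t : ℝ, 0 ≤ t →
      HasDerivAt (γ 1) (-(γ 1 t) * R t + (1/(2*(s:ℝ)) - δ t / 2) * Γ t) t)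
    (hderivγ : ∀ j, 2 ≤ j → j ≤ 8*s → ∀ t : ℝ, 0 ≤ t →
      HasDerivAt (γ j) (γ (j-1) t - γ j t * R t) t)
    (T₁ : ℝ) (hT₁ : 0 ≤ T₁)
    (hΛ₂T₁ : α T₁ + δ T₁ / 16 + B T₁ / 4 ≤ 1)
    (hαt : ∀ t : ℝ, T₁ ≤ t → 0 ≤ α t)
    (hδt : ∀ t : ℝ, T₁ ≤ t → 0 ≤ δ t)
    (hβt : ∀ t : ℝ, T₁ ≤ t → ∀ j, 1 ≤ j → j ≤ 8*s → 0 ≤ β j t)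
    (hΓt : ∀ t : ℝ, T₁ ≤ t → 1 - 2/(s:ℝ) ≤ Γ t ∧ Γ t ≤ 1)
    (hRt : ∀ t : ℝ, T₁ ≤ t → 1 + 1/(4*(s:ℝ)) ≤ R t)
    (hBt : ∀ t : ℝ, T₁ ≤ t → B t ≤ 1/64) :
    (∀ t : ℝ, T₁ ≤ t → ∀ j, 1 ≤ j → j ≤ 8*s →
      β j t ≤ 4 * Real.exp (-(t - T₁)/(8*(s:ℝ)))) ∧
    (∀ t : ℝ, T₁ ≤ t → B t ≤ 32*(s:ℝ) * Real.exp (-(t - T₁)/(8*(s:ℝ)))) ∧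
    (∀ t : ℝ, T₁ + 64*(s:ℝ)^2 ≤ t → B t ≤ 32*(s:ℝ) * Real.exp (-(8*(s:ℝ)))) := by
  have hs' : (32:ℝ) ≤ (s:ℝ) := by exact_mod_cast hs
  have hσ0 : (0:ℝ) < (s:ℝ) := by linarith
  -- the per-index derivative of β j
  set d : ℕ → ℝ → ℝ := fun j t =>
    if j = 1 then -(β 1 t) * R t + (α t / 2) * Γ t else β (j-1) t - β j t * R t with hd
  -- derivative of B
  have hderivB : ∀ t : ℝ, 0 ≤ t →
      HasDerivAt B (∑ j ∈ Finset.Icc 1 (8*s), d j t) t := by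
    intro t ht
    have hBf : B = fun t => ∑ j ∈ Finset.Icc 1 (8*s), β j t := funext hB
    rw [hBf]
    apply HasDerivAt.fun_sum
    intro j hj
    rw [Finset.mem_Icc] at hj
    by_cases h1 : j = 1
    · subst h1; simpa [hd] using hderivβ1 t ht
    · simp only [hd, if_neg h1]
      exact hderivβ j (by omega) hj.2 t ht
  -- bound on the sum of derivatives
  have hsumbound : ∀ t : ℝ, T₁ ≤ t →
      (∑ j ∈ Finset.Icc 1 (8*s), d j t)
        ≤ (α t / 2) * Γ t - B t * (1/(4*(s:ℝ))) := by
    intro t ht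
    have hβnn : ∀ j ∈ Finset.Icc 1 (8*s), 0 ≤ β j t := by
      intro j hj; rw [Finset.mem_Icc] at hj; exact hβt t ht j hj.1 hj.2
    have hBnn : 0 ≤ B t := by
      rw [hB]; exact Finset.sum_nonneg hβnn
    have hsplit : Finset.Icc 1 (8*s) = insert 1 (Finset.Icc 2 (8*s)) := by
      ext x; simp only [Finset.mem_Icc, Finset.mem_insert]; omega
    have h1not : (1:ℕ) ∉ Finset.Icc 2 (8*s) := by simp
    -- telescoping piece
    have hmap : Finset.Icc 2 (8*s) = (Finset.Icc 1 (8*s-1)).map (addRightEmbedding 1) := by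
      rw [Finset.map_add_right_Icc]; congr 1; omega
    have htel : ∑ j ∈ Finset.Icc 2 (8*s), β (j-1) t = ∑ j ∈ Finset.Icc 1 (8*s-1), β j t := by
      rw [hmap, Finset.sum_map]
      apply Finset.sum_congr rfl
      intro i hi
      simp [addRightEmbedding]
    have htel2 : ∑ j ∈ Finset.Icc 1 (8*s-1), β j t ≤ B t := by
      rw [hB]
      apply Finset.sum_le_sum_of_subset_of_nonneg
      · exact Finset.Icc_subset_Icc_right (by omega)
      · intro i hi _; rw [Finset.mem_Icc] at hi; exact hβt t ht i hi.1 hi.2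
    have hsum2 : ∑ j ∈ Finset.Icc 2 (8*s), d j t
        = (∑ j ∈ Finset.Icc 2 (8*s), β (j-1) t) - (∑ j ∈ Finset.Icc 2 (8*s), β j t) * R t := by
      rw [show (∑ j ∈ Finset.Icc 2 (8*s), d j t)
            = ∑ j ∈ Finset.Icc 2 (8*s), (β (j-1) t - β j t * R t) from
          Finset.sum_congr rfl (fun j hj => by
            rw [Finset.mem_Icc] at hj
            simp [hd, show j ≠ 1 by omega])]
      rw [Finset.sum_sub_distrib, Finset.sum_mul]
    have hBsplit : B t = β 1 t + ∑ j ∈ Finset.Icc 2 (8*s), β j t := by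
      rw [hB, hsplit, Finset.sum_insert h1not]
    have hRpos : 1 + 1/(4*(s:ℝ)) ≤ R t := hRt t ht
    have hfull : ∑ j ∈ Finset.Icc 1 (8*s), d j t
        = (α t / 2) * Γ t - B t * R t + ∑ j ∈ Finset.Icc 2 (8*s), β (j-1) t := by
      rw [hsplit, Finset.sum_insert h1not, hsum2]
      simp only [hd, if_pos rfl]
      rw [hBsplit]; ring
    have hfrac : 0 < 1/(4*(s:ℝ)) := by positivity
    calc ∑ j ∈ Finset.Icc 1 (8*s), d j t
        = (α t / 2) * Γ t - B t * R t + ∑ j ∈ Finset.Icc 2 (8*s), β (j-1) t := hfull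
      _ ≤ (α t / 2) * Γ t - B t * (1 + 1/(4*(s:ℝ))) + B t := by
          have := mul_le_mul_of_nonneg_left hRpos hBnn
          rw [htel]; linarith [htel2]
      _ = (α t / 2) * Γ t - B t * (1/(4*(s:ℝ))) := by ring
  -- Λ and its derivative
  set Λ : ℝ → ℝ := fun x => α x + δ x / 16 + B x / 4 with hΛdef
  set DΛ : ℝ → ℝ := fun x =>
    (-(α x / 2) * (Γ x - B x) + δ x * B x)
      + ((α x / 2) * (Γ x - B x) + ((1/(s:ℝ) - α x - δ x)/2) * B x - δ x * Γ x)/16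
      + (∑ j ∈ Finset.Icc 1 (8*s), d j x)/4 with hDΛdef
  have hΛderiv : ∀ x : ℝ, 0 ≤ x → HasDerivAt Λ (DΛ x) x := fun x hx =>
    ((hderivα x hx).add ((hderivδ x hx).div_const 16)).add ((hderivB x hx).div_const 4)
  have hDΛle : ∀ x : ℝ, T₁ ≤ x → DΛ x ≤ -(1/(8*(s:ℝ)) * Λ x) := by
    intro x hx
    have hBnn : 0 ≤ B x := by
      rw [hB]
      exact Finset.sum_nonneg fun j hj => by
        rw [Finset.mem_Icc] at hj; exact hβt x hx j hj.1 hj.2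
    exact arith_key (s:ℝ) (α x) (δ x) (B x) (Γ x) _ hs' (hαt x hx) (hδt x hx)
      hBnn (hBt x hx) (hΓt x hx).1 (hΓt x hx).2 (hsumbound x hx)
  -- the auxiliary function g
  set g : ℝ → ℝ := fun x => Λ x * Real.exp ((x - T₁)/(8*(s:ℝ))) with hgdef
  have hgderiv : ∀ x : ℝ, T₁ ≤ x → HasDerivAt g
      (DΛ x * Real.exp ((x - T₁)/(8*(s:ℝ)))
        + Λ x * (Real.exp ((x - T₁)/(8*(s:ℝ))) * (1/(8*(s:ℝ))))) x := by
    intro x hx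
    have hexp : HasDerivAt (fun y => Real.exp ((y - T₁)/(8*(s:ℝ))))
        (Real.exp ((x - T₁)/(8*(s:ℝ))) * (1/(8*(s:ℝ)))) x := by
      have h1 : HasDerivAt (fun y : ℝ => (y - T₁)/(8*(s:ℝ))) (1/(8*(s:ℝ))) x := by
        simpa using ((hasDerivAt_id x).sub_const T₁).div_const (8*(s:ℝ))
      simpa using h1.exp
    exact (hΛderiv x (le_trans hT₁ hx)).mul hexp
  have hganti : AntitoneOn g (Set.Ici T₁) := by
    apply antitoneOn_of_deriv_nonpos (convex_Ici T₁)
    · intro x hx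
      exact (hgderiv x hx).continuousAt.continuousWithinAt
    · intro x hx
      rw [interior_Ici] at hx
      exact (hgderiv x (le_of_lt hx)).differentiableAt.differentiableWithinAt
    · intro x hx
      rw [interior_Ici] at hx
      have hx' : T₁ ≤ x := le_of_lt hx
      rw [(hgderiv x hx').deriv]
      have h1 := hDΛle x hx'
      have h2 : (0:ℝ) < Real.exp ((x - T₁)/(8*(s:ℝ))) := Real.exp_pos _
      nlinarith [mul_le_mul_of_nonneg_right h1 (le_of_lt h2)]
  have key : ∀ t : ℝ, T₁ ≤ t → Λ t ≤ Real.exp (-(t - T₁)/(8*(s:ℝ))) := by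
    intro t ht
    have h1 : g t ≤ g T₁ := hganti Set.self_mem_Ici ht ht
    have h2 : g T₁ ≤ 1 := by
      simp only [hgdef, hΛdef, sub_self, zero_div, Real.exp_zero, mul_one]
      exact hΛ₂T₁
    have h3 : (0:ℝ) < Real.exp ((t - T₁)/(8*(s:ℝ))) := Real.exp_pos _
    have h4 : Λ t * Real.exp ((t - T₁)/(8*(s:ℝ))) ≤ 1 := le_trans h1 h2
    rw [neg_div, Real.exp_neg, ← one_div, le_div_iff₀ h3]
    linarith [h4]
  -- conclusions
  clear_value Λ DΛ g
  have hBleΛ : ∀ t : ℝ, T₁ ≤ t → B t ≤ 4 * Λ t := by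
    intro t ht
    have := hαt t ht; have := hδt t ht
    simp only [hΛdef]; linarith
  have claim1 : ∀ t : ℝ, T₁ ≤ t → ∀ j, 1 ≤ j → j ≤ 8*s →
      β j t ≤ 4 * Real.exp (-(t - T₁)/(8*(s:ℝ))) := by
    intro t ht j hj1 hj2
    have hβB : β j t ≤ B t := by
      rw [hB]
      exact Finset.single_le_sum (f := fun i => β i t)
        (fun i hi => by rw [Finset.mem_Icc] at hi; exact hβt t ht i hi.1 hi.2)
        (Finset.mem_Icc.mpr ⟨hj1, hj2⟩)
    have := hBleΛ t ht
    have := key t ht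
    linarith
  have claim2 : ∀ t : ℝ, T₁ ≤ t → B t ≤ 32*(s:ℝ) * Real.exp (-(t - T₁)/(8*(s:ℝ))) := by
    intro t ht
    have h1 := hBleΛ t ht
    have h2 := key t ht
    have h3 : (0:ℝ) < Real.exp (-(t - T₁)/(8*(s:ℝ))) := Real.exp_pos _
    nlinarith
  refine ⟨claim1, claim2, ?_⟩
  intro t ht
  have hsq : (0:ℝ) ≤ 64*(s:ℝ)^2 := by positivity
  have ht' : T₁ ≤ t := by linarith
  have h1 := claim2 t ht'
  have h2 : Real.exp (-(t - T₁)/(8*(s:ℝ))) ≤ Real.exp (-(8*(s:ℝ))) := by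
    apply Real.exp_le_exp.mpr
    rw [neg_div, neg_le_neg_iff, le_div_iff₀ (by positivity : (0:ℝ) < 8*(s:ℝ))]
    nlinarith
  have h3 : (0:ℝ) < 32*(s:ℝ) := by positivity
  nlinarith [Real.exp_pos (-(8*(s:ℝ)))]
end

section
/- Let s ≥ 32, let T₂ ≥ 0, set ζ₃ = 1/2 − 2/s, d = 2^{1−8s}/s, and a_j = 2^{1−j}/s for 1 ≤ j ≤ 8s+1, and define Λ₃(t) = α(t) + d·δ(t) + Σ_{j=1}^{8s+1} a_j·β_j(t). Assume that for all t ≥ T₂ the variables satisfy α(t) ≥ 0, δ(t) ≥ 0, β_j(t) ≥ 0 for all 1 ≤ j ≤ 8s+1, 1 − 2/s ≤ Γ(t) ≤ 1, R(t) ≥ 1 + 1/(4s), and β(t) ≤ 2^{2−8s}/s². Then Λ₃'(t) ≤ −ζ₃·Λ₃(t) for all t ≥ T₂, and consequently Λ₃(t) ≤ Λ₃(T₂)·e^{−ζ₃(t−T₂)} for all t ≥ T₂. -/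
set_option maxHeartbeats 1000000

lemma tele_aux (a c : ℕ → ℝ) (n : ℕ) (h : ∀ j, 1 ≤ j → j ≤ n → a (j+1) = a j / 2) :
    ∑ j ∈ Finset.Icc 2 (n+1), a j * c (j-1) = ∑ j ∈ Finset.Icc 1 n, a j / 2 * c j := by
  induction n with
  | zero => simp
  | succ k ih =>
      rw [Finset.sum_Icc_succ_top (by omega : 2 ≤ k+1+1),
          Finset.sum_Icc_succ_top (by omega : 1 ≤ k+1),
          ih (fun j h1 h2 => h j h1 (by omega)), h (k+1) (by omega) (by omega)]
      norm_num

lemma icc_insert (n : ℕ) (hn : 1 ≤ n) : Finset.Icc 1 n = insert 1 (Finset.Icc 2 n) := by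
  ext x; simp [Finset.mem_Icc, Finset.mem_insert]; omega

lemma sum_identity (s : ℕ) (hs : 32 ≤ s) (a : ℕ → ℝ) (α : ℝ → ℝ) (β : ℕ → ℝ → ℝ)
    (Γ R : ℝ → ℝ) (t : ℝ)
    (hhalf : ∀ j, 1 ≤ j → j ≤ 8*s → a (j+1) = a j / 2) :
    ∑ j ∈ Finset.Icc 1 (8*s+1), a j *
      (if j = 1 then -(β 1 t) * R t + (α t / 2) * Γ t
       else if j = 8*s+1 then β (8*s) t - β (8*s+1) t * Γ t
       else β (j-1) t - β j t * R t)
    = (∑ j ∈ Finset.Icc 1 (8*s), a j * β j t) * (1/2 - R t)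
      + a 1 * ((α t / 2) * Γ t) - a (8*s+1) * (β (8*s+1) t * Γ t) := by
  rw [Finset.sum_Icc_succ_top (by omega : 1 ≤ 8*s+1)]
  rw [if_neg (by omega), if_pos rfl]
  conv_lhs => rw [icc_insert (8*s) (by omega), Finset.sum_insert (by simp)]
  rw [if_pos rfl]
  have hcong : ∑ j ∈ Finset.Icc 2 (8*s), a j *
      (if j = 1 then -(β 1 t) * R t + (α t / 2) * Γ t
       else if j = 8*s+1 then β (8*s) t - β (8*s+1) t * Γ t
       else β (j-1) t - β j t * R t)
      = ∑ j ∈ Finset.Icc 2 (8*s), (a j * β (j-1) t - a j * β j t * R t) := by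
    apply Finset.sum_congr rfl
    intro j hj
    rw [Finset.mem_Icc] at hj
    rw [if_neg (by omega), if_neg (by omega)]
    ring
  rw [hcong, Finset.sum_sub_distrib]
  have htel : ∑ j ∈ Finset.Icc 2 (8*s), a j * β (j-1) t + a (8*s+1) * β (8*s) t
      = ∑ j ∈ Finset.Icc 1 (8*s), a j / 2 * β j t := by
    rw [← tele_aux a (fun j => β j t) (8*s) hhalf,
        Finset.sum_Icc_succ_top (by omega : 2 ≤ 8*s+1)]
    norm_num
  have hR2 : (∑ j ∈ Finset.Icc 1 (8*s), a j * β j t) * R t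
      = a 1 * β 1 t * R t + ∑ j ∈ Finset.Icc 2 (8*s), a j * β j t * R t := by
    rw [icc_insert (8*s) (by omega), Finset.sum_insert (by simp), add_mul, Finset.sum_mul]
  have h2 : ∑ j ∈ Finset.Icc 1 (8*s), a j / 2 * β j t
      = (∑ j ∈ Finset.Icc 1 (8*s), a j * β j t) / 2 := by
    rw [Finset.sum_div]; apply Finset.sum_congr rfl; intro j _; ring
  linear_combination htel + h2 + hR2

lemma scalar_a (σ p G Bt ζ₃ : ℝ) (hσ0 : 0 < σ) (hσ : σ ≤ 1/32) (hp0 : 0 < p) (hp : p ≤ 1/256)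
    (hG1 : 1 - 2*σ ≤ G) (hG2 : G ≤ 1) (hB0 : 0 ≤ Bt) (hB : Bt ≤ 4*p*σ^2)
    (hζ : ζ₃ = 1/2 - 2*σ) :
    -(G - Bt)/2 + (p*σ)*(G-Bt) - (p*σ)*Bt + G*σ/2 + ζ₃ ≤ 0 := by
  rw [hζ]
  nlinarith [mul_nonneg (sub_nonneg.2 hG1) (by nlinarith : (0:ℝ) ≤ 1/2 - p*σ - σ/2),
    mul_le_mul_of_nonneg_right hB (by nlinarith : (0:ℝ) ≤ 1/2 - 2*p*σ),
    mul_pos hp0 hσ0, mul_nonneg (mul_nonneg hp0.le hσ0.le) hσ0.le, sq_nonneg σ]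

lemma scalar_d (σ p G Bt ζ₃ : ℝ) (hσ0 : 0 < σ) (hσ : σ ≤ 1/32) (hp0 : 0 < p)
    (hG1 : 1 - 2*σ ≤ G) (hB0 : 0 ≤ Bt) (hB : Bt ≤ 4*p*σ^2)
    (hζ : ζ₃ = 1/2 - 2*σ) :
    Bt - (p*σ)*Bt - (2*p*σ)*G + ζ₃*(2*p*σ) ≤ 0 := by
  rw [hζ]
  nlinarith [mul_le_mul_of_nonneg_left hG1 (by positivity : (0:ℝ) ≤ 2*p*σ),
    mul_nonneg (mul_nonneg hp0.le hσ0.le) hB0,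
    mul_nonneg (mul_nonneg hp0.le hσ0.le) hσ0.le, mul_pos hp0 hσ0]

theorem stmt_15
    (s : ℕ) (hs : 32 ≤ s)
    (α δ : ℝ → ℝ) (β γ : ℕ → ℝ → ℝ) (B Γ u R : ℝ → ℝ)
    (hB : ∀ t, B t = ∑ j ∈ Finset.Icc 1 (8*s), β j t)
    (hΓ : ∀ t, Γ t = ∑ j ∈ Finset.Icc 1 (8*s), γ j t)
    (hu : ∀ t, u t = 1 - 1/(s:ℝ) - Γ t)
    (hR : ∀ t, R t = 1 + 1/(2*(s:ℝ)) - δ t / 2 - u t)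
    (hderivα : ∀ t : ℝ, 0 ≤ t → HasDerivAt α (-(α t / 2) * (Γ t - B t) + δ t * B t) t)
    (hderivδ : ∀ t : ℝ, 0 ≤ t →
      HasDerivAt δ ((α t / 2) * (Γ t - B t) + ((1/(s:ℝ) - α t - δ t)/2) * B t - δ t * Γ t) t)
    (hderivβ1 : ∀ t : ℝ, 0 ≤ t → HasDerivAt (β 1) (-(β 1 t) * R t + (α t / 2) * Γ t) t)
    (hderivβ : ∀ j, 2 ≤ j → j ≤ 8*s → ∀ t : ℝ, 0 ≤ t →
      HasDerivAt (β j) (β (j-1) t - β j t * R t) t)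
    (hderivγ1 : ∀ t : ℝ, 0 ≤ t →
      HasDerivAt (γ 1) (-(γ 1 t) * R t + (1/(2*(s:ℝ)) - δ t / 2) * Γ t) t)
    (hderivγ : ∀ j, 2 ≤ j → j ≤ 8*s → ∀ t : ℝ, 0 ≤ t →
      HasDerivAt (γ j) (γ (j-1) t - γ j t * R t) t)
    (hderivβlast : ∀ t : ℝ, 0 ≤ t →
      HasDerivAt (β (8*s+1)) (β (8*s) t - β (8*s+1) t * Γ t) t)
    (T₂ : ℝ) (hT₂ : 0 ≤ T₂)
    (ζ₃ d : ℝ) (a : ℕ → ℝ)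
    (hζ₃ : ζ₃ = 1/2 - 2/(s:ℝ))
    (hd : d = (2:ℝ)^((1:ℤ) - 8*(s:ℤ)) / (s:ℝ))
    (ha : ∀ j, 1 ≤ j → j ≤ 8*s+1 → a j = (2:ℝ)^((1:ℤ) - (j:ℤ)) / (s:ℝ))
    (hαt : ∀ t : ℝ, T₂ ≤ t → 0 ≤ α t)
    (hδt : ∀ t : ℝ, T₂ ≤ t → 0 ≤ δ t)
    (hβt : ∀ t : ℝ, T₂ ≤ t → ∀ j, 1 ≤ j → j ≤ 8*s+1 → 0 ≤ β j t)
    (hΓt : ∀ t : ℝ, T₂ ≤ t → 1 - 2/(s:ℝ) ≤ Γ t ∧ Γ t ≤ 1)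
    (hRt : ∀ t : ℝ, T₂ ≤ t → 1 + 1/(4*(s:ℝ)) ≤ R t)
    (hBt : ∀ t : ℝ, T₂ ≤ t → B t ≤ (2:ℝ)^((2:ℤ) - 8*(s:ℤ)) / (s:ℝ)^2) :
    (∀ t : ℝ, T₂ ≤ t →
      deriv (fun x => α x + d * δ x + ∑ j ∈ Finset.Icc 1 (8*s+1), a j * β j x) t ≤
        -ζ₃ * (α t + d * δ t + ∑ j ∈ Finset.Icc 1 (8*s+1), a j * β j t)) ∧
    (∀ t : ℝ, T₂ ≤ t →
      α t + d * δ t + ∑ j ∈ Finset.Icc 1 (8*s+1), a j * β j t ≤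
        (α T₂ + d * δ T₂ + ∑ j ∈ Finset.Icc 1 (8*s+1), a j * β j T₂) *
          Real.exp (-ζ₃ * (t - T₂))) := by
  have hsR : (32:ℝ) ≤ (s:ℝ) := by exact_mod_cast hs
  have hs0 : (0:ℝ) < (s:ℝ) := by linarith
  have hσ0 : 0 < (s:ℝ)⁻¹ := by positivity
  have hσ32 : (s:ℝ)⁻¹ ≤ 1/32 := by
    rw [show (1:ℝ)/32 = 32⁻¹ by norm_num]
    exact inv_anti₀ (by norm_num) hsR
  set p : ℝ := (2:ℝ)^(-(8*(s:ℤ))) with hp_def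
  have hp0 : 0 < p := by positivity
  have hp' : p ≤ 1/256 := by
    rw [hp_def]
    calc (2:ℝ)^(-(8*(s:ℤ))) ≤ (2:ℝ)^(-8:ℤ) := zpow_le_zpow_right₀ one_le_two (by omega)
      _ = 1/256 := by norm_num
  have hd' : d = 2*p/(s:ℝ) := by
    rw [hd, hp_def, show (1:ℤ) - 8*(s:ℤ) = 1 + -(8*s) by ring, zpow_add₀ (two_ne_zero)]
    norm_num
  have ha1 : a 1 = 1/(s:ℝ) := by rw [ha 1 le_rfl (by omega)]; norm_num
  have haN : a (8*s+1) = p/(s:ℝ) := by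
    rw [ha (8*s+1) (by omega) le_rfl, show (1:ℤ) - ((8*s+1:ℕ):ℤ) = -(8*(s:ℤ)) by push_cast; ring]
  have hhalf : ∀ j, 1 ≤ j → j ≤ 8*s → a (j+1) = a j / 2 := by
    intro j h1 h2
    rw [ha (j+1) (by omega) (by omega), ha j h1 (by omega),
      show (1:ℤ) - ((j:ℕ)+1:ℕ) = (1 - (j:ℤ)) + -1 by push_cast; ring, zpow_add₀ (two_ne_zero)]
    norm_num; ring
  have hda : ∀ j, 1 ≤ j → j ≤ 8*s → d ≤ a j := by
    intro j h1 h2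
    rw [hd, ha j h1 (by omega)]
    gcongr
    · exact one_le_two
    · omega
  have hapos : ∀ j, 1 ≤ j → j ≤ 8*s+1 → 0 ≤ a j := by
    intro j h1 h2; rw [ha j h1 h2]; positivity
  have hBbound : ∀ t : ℝ, T₂ ≤ t → B t ≤ 4*p*((s:ℝ)⁻¹)^2 := by
    intro t ht
    have h := hBt t ht
    rw [show (2:ℤ) - 8*(s:ℤ) = 2 + -(8*(s:ℤ)) by ring, zpow_add₀ (two_ne_zero),
      show ((2:ℝ)^(2:ℤ)) = 4 by norm_num, ← hp_def] at h
    calc B t ≤ 4*p/(s:ℝ)^2 := h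
      _ = 4*p*((s:ℝ)⁻¹)^2 := by rw [div_eq_mul_inv, inv_pow]
  -- derivative of the potential
  have hE : ∀ t : ℝ, 0 ≤ t →
      HasDerivAt (fun x => α x + d * δ x + ∑ j ∈ Finset.Icc 1 (8*s+1), a j * β j x)
        ((-(α t / 2) * (Γ t - B t) + δ t * B t)
          + d * ((α t / 2) * (Γ t - B t) + ((1/(s:ℝ) - α t - δ t)/2) * B t - δ t * Γ t)
          + ∑ j ∈ Finset.Icc 1 (8*s+1), a j *
            (if j = 1 then -(β 1 t) * R t + (α t / 2) * Γ t
             else if j = 8*s+1 then β (8*s) t - β (8*s+1) t * Γ t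
             else β (j-1) t - β j t * R t)) t := by
    intro t ht
    refine ((hderivα t ht).add ((hderivδ t ht).const_mul d)).add ?_
    refine HasDerivAt.fun_sum (fun j hj => ?_)
    rw [Finset.mem_Icc] at hj
    by_cases h1 : j = 1
    · subst h1
      rw [if_pos rfl]
      exact (hderivβ1 t ht).const_mul _
    · by_cases h2 : j = 8*s+1
      · subst h2
        rw [if_neg h1, if_pos rfl]
        exact (hderivβlast t ht).const_mul _
      · rw [if_neg h1, if_neg h2]
        exact (hderivβ j (by omega) (by omega) t ht).const_mul _
  -- the key differential inequality
  have key : ∀ t : ℝ, T₂ ≤ t →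
      ((-(α t / 2) * (Γ t - B t) + δ t * B t)
        + d * ((α t / 2) * (Γ t - B t) + ((1/(s:ℝ) - α t - δ t)/2) * B t - δ t * Γ t)
        + ∑ j ∈ Finset.Icc 1 (8*s+1), a j *
          (if j = 1 then -(β 1 t) * R t + (α t / 2) * Γ t
           else if j = 8*s+1 then β (8*s) t - β (8*s+1) t * Γ t
           else β (j-1) t - β j t * R t))
      + ζ₃ * (α t + d * δ t + ∑ j ∈ Finset.Icc 1 (8*s+1), a j * β j t) ≤ 0 := by
    intro t ht
    have hBt0 : 0 ≤ B t := by
      rw [hB]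
      exact Finset.sum_nonneg fun j hj => by
        rw [Finset.mem_Icc] at hj; exact hβt t ht j hj.1 (by omega)
    have hS0 : 0 ≤ ∑ j ∈ Finset.Icc 1 (8*s), a j * β j t :=
      Finset.sum_nonneg fun j hj => by
        rw [Finset.mem_Icc] at hj
        exact mul_nonneg (hapos j hj.1 (by omega)) (hβt t ht j hj.1 (by omega))
    have hdB : d * B t ≤ ∑ j ∈ Finset.Icc 1 (8*s), a j * β j t := by
      rw [hB, Finset.mul_sum]
      refine Finset.sum_le_sum fun j hj => ?_
      rw [Finset.mem_Icc] at hj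
      exact mul_le_mul_of_nonneg_right (hda j hj.1 hj.2) (hβt t ht j hj.1 (by omega))
    rw [sum_identity s hs a α β Γ R t hhalf,
      Finset.sum_Icc_succ_top (by omega : 1 ≤ 8*s+1), ha1, haN, hd']
    rw [hd'] at hdB
    set A := α t
    set D := δ t
    set G := Γ t
    set Rt := R t
    set Bt := B t
    set b := β (8*s+1) t
    set S := ∑ j ∈ Finset.Icc 1 (8*s), a j * β j t with hS_def
    have hA : 0 ≤ A := hαt t ht
    have hD : 0 ≤ D := hδt t ht
    have hb : 0 ≤ b := hβt t ht (8*s+1) (by omega) le_rfl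
    have hG1 : 1 - 2*(s:ℝ)⁻¹ ≤ G := by
      have := (hΓt t ht).1; rwa [div_eq_mul_inv] at this
    have hG2 : G ≤ 1 := (hΓt t ht).2
    have hRt' : 1 + (s:ℝ)⁻¹/4 ≤ Rt := by
      have h := hRt t ht
      rwa [show 1/(4*(s:ℝ)) = (s:ℝ)⁻¹/4 by rw [one_div, mul_inv]; ring] at h
    have hBt' : Bt ≤ 4*p*((s:ℝ)⁻¹)^2 := hBbound t ht
    have hζ' : ζ₃ = 1/2 - 2*(s:ℝ)⁻¹ := by rw [hζ₃]; ring
    have hCα : A * (-(G - Bt)/2 + (p*(s:ℝ)⁻¹)*(G-Bt) - (p*(s:ℝ)⁻¹)*Bt + G*(s:ℝ)⁻¹/2 + ζ₃) ≤ 0 :=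
      mul_nonpos_of_nonneg_of_nonpos hA
        (scalar_a _ p G Bt ζ₃ hσ0 hσ32 hp0 hp' hG1 hG2 hBt0 hBt' hζ')
    have hCδ : D * (Bt - (p*(s:ℝ)⁻¹)*Bt - (2*p*(s:ℝ)⁻¹)*G + ζ₃*(2*p*(s:ℝ)⁻¹)) ≤ 0 :=
      mul_nonpos_of_nonneg_of_nonpos hD
        (scalar_d _ p G Bt ζ₃ hσ0 hσ32 hp0 hG1 hBt0 hBt' hζ')
    have hSineq : S * (1/2 - Rt + ζ₃ + (s:ℝ)⁻¹/2) ≤ 0 := by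
      apply mul_nonpos_of_nonneg_of_nonpos hS0
      rw [hζ']
      linarith
    have hbineq : (p*(s:ℝ)⁻¹) * b * (ζ₃ - G) ≤ 0 := by
      apply mul_nonpos_of_nonneg_of_nonpos (by positivity)
      rw [hζ']
      linarith
    have hB3 : p*Bt*((s:ℝ)⁻¹)^2 - S*(s:ℝ)⁻¹/2 ≤ 0 := by
      have h := mul_le_mul_of_nonneg_right hdB (by positivity : (0:ℝ) ≤ (s:ℝ)⁻¹/2)
      have h2 : p*Bt*((s:ℝ)⁻¹)^2 = (2*p/(s:ℝ) * Bt) * ((s:ℝ)⁻¹/2) := by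
        rw [div_eq_mul_inv]; ring
      have h3 : S * ((s:ℝ)⁻¹/2) = S*(s:ℝ)⁻¹/2 := by ring
      linarith [h2 ▸ h3 ▸ h]
    calc -(A / 2) * (G - Bt) + D * Bt
          + 2 * p / (s:ℝ) * (A / 2 * (G - Bt) + (1 / (s:ℝ) - A - D) / 2 * Bt - D * G)
          + (S * (1 / 2 - Rt) + 1 / (s:ℝ) * (A / 2 * G) - p / (s:ℝ) * (b * G))
          + ζ₃ * (A + 2 * p / (s:ℝ) * D + (S + p / (s:ℝ) * b))
        = (((A * (-(G - Bt)/2 + (p*(s:ℝ)⁻¹)*(G-Bt) - (p*(s:ℝ)⁻¹)*Bt + G*(s:ℝ)⁻¹/2 + ζ₃)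
            + D * (Bt - (p*(s:ℝ)⁻¹)*Bt - (2*p*(s:ℝ)⁻¹)*G + ζ₃*(2*p*(s:ℝ)⁻¹)))
            + S * (1/2 - Rt + ζ₃ + (s:ℝ)⁻¹/2))
            + (p*(s:ℝ)⁻¹) * b * (ζ₃ - G))
          + (p*Bt*((s:ℝ)⁻¹)^2 - S*(s:ℝ)⁻¹/2) := by
          field_simp
          ring
      _ ≤ 0 := add_nonpos (add_nonpos (add_nonpos (add_nonpos hCα hCδ) hSineq) hbineq) hB3
  constructor
  · intro t ht
    rw [(hE t (le_trans hT₂ ht)).deriv]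
    linarith [key t ht]
  · intro t ht
    set F : ℝ → ℝ := fun x => α x + d * δ x + ∑ j ∈ Finset.Icc 1 (8*s+1), a j * β j x with hF
    set g : ℝ → ℝ := fun x => F x * Real.exp (ζ₃ * (x - T₂)) with hg_def
    have hg : ∀ x : ℝ, T₂ ≤ x → HasDerivAt g
        ((((-(α x / 2) * (Γ x - B x) + δ x * B x)
          + d * ((α x / 2) * (Γ x - B x) + ((1/(s:ℝ) - α x - δ x)/2) * B x - δ x * Γ x)
          + ∑ j ∈ Finset.Icc 1 (8*s+1), a j *
            (if j = 1 then -(β 1 x) * R x + (α x / 2) * Γ x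
             else if j = 8*s+1 then β (8*s) x - β (8*s+1) x * Γ x
             else β (j-1) x - β j x * R x))
          + ζ₃ * F x) * Real.exp (ζ₃ * (x - T₂))) x := by
      intro x hx
      have h1 := (hE x (le_trans hT₂ hx)).mul
        ((((hasDerivAt_id x).sub_const T₂).const_mul ζ₃).exp)
      refine h1.congr_deriv ?_
      simp only [id]
      ring
    have hanti : AntitoneOn g (Set.Ici T₂) := by
      refine antitoneOn_of_deriv_nonpos (convex_Ici T₂) ?_ ?_ ?_
      · exact fun x hx => ((hg x hx).differentiableAt).continuousAt.continuousWithinAt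
      · intro x hx
        rw [interior_Ici] at hx
        exact ((hg x (le_of_lt hx)).differentiableAt).differentiableWithinAt
      · intro x hx
        rw [interior_Ici] at hx
        rw [(hg x (le_of_lt hx)).deriv]
        exact mul_nonpos_of_nonpos_of_nonneg (key x (le_of_lt hx)) (Real.exp_pos _).le
    have hgle : g t ≤ g T₂ := hanti (Set.self_mem_Ici) (Set.mem_Ici.2 ht) ht
    have hgT : g T₂ = F T₂ := by simp [hg_def]
    have hexp : Real.exp (ζ₃ * (t - T₂)) * Real.exp (-ζ₃ * (t - T₂)) = 1 := by
      rw [← Real.exp_add, show ζ₃ * (t - T₂) + -ζ₃ * (t - T₂) = 0 by ring, Real.exp_zero]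
    have := mul_le_mul_of_nonneg_right (hgT ▸ hgle) (Real.exp_pos (-ζ₃ * (t - T₂))).le
    rw [hg_def] at this
    simp only at this
    calc α t + d * δ t + ∑ j ∈ Finset.Icc 1 (8*s+1), a j * β j t
        = F t * Real.exp (ζ₃ * (t - T₂)) * Real.exp (-ζ₃ * (t - T₂)) := by
          rw [mul_assoc, hexp, mul_one]
      _ ≤ F T₂ * Real.exp (-ζ₃ * (t - T₂)) := this
      _ = (α T₂ + d * δ T₂ + ∑ j ∈ Finset.Icc 1 (8*s+1), a j * β j T₂) *
            Real.exp (-ζ₃ * (t - T₂)) := rfl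
end

section
/- Let s ≥ 32, let T₂ ≥ 0, set ζ₃ = 1/2 − 2/s, d = 2^{1−8s}/s, and a_j = 2^{1−j}/s for 1 ≤ j ≤ 8s+1, and define Λ₃(t) = α(t) + d·δ(t) + Σ_{j=1}^{8s+1} a_j·β_j(t). Assume that Λ₃(T₂) ≤ 1, and that for all t ≥ T₂ the variables satisfy α(t) ≥ 0, δ(t) ≥ 0, β_j(t) ≥ 0 for all 1 ≤ j ≤ 8s+1, 1 − 2/s ≤ Γ(t) ≤ 1, R(t) ≥ 1 + 1/(4s), and β(t) ≤ 2^{2−8s}/s². Then for any real n > 1 and any θ > 0, setting T₃ = T₂ + ((1+θ)/ζ₃)·ln n, one has α(T₃) + β(T₃) + β_{8s+1}(T₃) ≤ n^{−1−θ}·(1 + s·2^{8s+1}). -/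
set_option maxHeartbeats 4000000 in
theorem stmt_16
    (s : ℕ) (hs : 32 ≤ s)
    (α δ : ℝ → ℝ) (β γ : ℕ → ℝ → ℝ) (B Γ u R : ℝ → ℝ)
    (hB : ∀ t, B t = ∑ j ∈ Finset.Icc 1 (8*s), β j t)
    (hΓ : ∀ t, Γ t = ∑ j ∈ Finset.Icc 1 (8*s), γ j t)
    (hu : ∀ t, u t = 1 - 1/(s:ℝ) - Γ t)
    (hR : ∀ t, R t = 1 + 1/(2*(s:ℝ)) - δ t / 2 - u t)
    (hderivα : ∀ t : ℝ, 0 ≤ t → HasDerivAt α (-(α t / 2) * (Γ t - B t) + δ t * B t) t)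
    (hderivδ : ∀ t : ℝ, 0 ≤ t →
      HasDerivAt δ ((α t / 2) * (Γ t - B t) + ((1/(s:ℝ) - α t - δ t)/2) * B t - δ t * Γ t) t)
    (hderivβ1 : ∀ t : ℝ, 0 ≤ t → HasDerivAt (β 1) (-(β 1 t) * R t + (α t / 2) * Γ t) t)
    (hderivβ : ∀ j, 2 ≤ j → j ≤ 8*s → ∀ t : ℝ, 0 ≤ t →
      HasDerivAt (β j) (β (j-1) t - β j t * R t) t)
    (hderivγ1 : ∀ t : ℝ, 0 ≤ t →
      HasDerivAt (γ 1) (-(γ 1 t) * R t + (1/(2*(s:ℝ)) - δ t / 2) * Γ t) t)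
    (hderivγ : ∀ j, 2 ≤ j → j ≤ 8*s → ∀ t : ℝ, 0 ≤ t →
      HasDerivAt (γ j) (γ (j-1) t - γ j t * R t) t)
    (hderivβlast : ∀ t : ℝ, 0 ≤ t →
      HasDerivAt (β (8*s+1)) (β (8*s) t - β (8*s+1) t * Γ t) t)
    (T₂ : ℝ) (hT₂ : 0 ≤ T₂)
    (ζ₃ d : ℝ) (a : ℕ → ℝ)
    (hζ₃ : ζ₃ = 1/2 - 2/(s:ℝ))
    (hd : d = (2:ℝ)^((1:ℤ) - 8*(s:ℤ)) / (s:ℝ))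
    (ha : ∀ j, 1 ≤ j → j ≤ 8*s+1 → a j = (2:ℝ)^((1:ℤ) - (j:ℤ)) / (s:ℝ))
    (hΛ₃T₂ : α T₂ + d * δ T₂ + ∑ j ∈ Finset.Icc 1 (8*s+1), a j * β j T₂ ≤ 1)
    (hαt : ∀ t : ℝ, T₂ ≤ t → 0 ≤ α t)
    (hδt : ∀ t : ℝ, T₂ ≤ t → 0 ≤ δ t)
    (hβt : ∀ t : ℝ, T₂ ≤ t → ∀ j, 1 ≤ j → j ≤ 8*s+1 → 0 ≤ β j t)
    (hΓt : ∀ t : ℝ, T₂ ≤ t → 1 - 2/(s:ℝ) ≤ Γ t ∧ Γ t ≤ 1)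
    (hRt : ∀ t : ℝ, T₂ ≤ t → 1 + 1/(4*(s:ℝ)) ≤ R t)
    (hBt : ∀ t : ℝ, T₂ ≤ t → B t ≤ (2:ℝ)^((2:ℤ) - 8*(s:ℤ)) / (s:ℝ)^2) :
    ∀ n θ : ℝ, 1 < n → 0 < θ →
      α (T₂ + ((1+θ)/ζ₃) * Real.log n) + B (T₂ + ((1+θ)/ζ₃) * Real.log n) +
        β (8*s+1) (T₂ + ((1+θ)/ζ₃) * Real.log n) ≤
      n ^ (-1 - θ) * (1 + (s:ℝ) * 2^(8*s+1)) := by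
  intro n θ hn hθ
  -- basic numeric facts
  have hsR : (32:ℝ) ≤ (s:ℝ) := by exact_mod_cast hs
  have hs0 : (0:ℝ) < s := by linarith
  obtain ⟨w, hwdef⟩ : ∃ w : ℝ, w = 1/(s:ℝ) := ⟨_, rfl⟩
  have hw0 : (0:ℝ) < w := by rw [hwdef]; positivity
  have h32w : 32 * w ≤ 1 := by
    rw [hwdef, mul_one_div]
    exact (div_le_one hs0).2 hsR
  have h2w : (2:ℝ)/(s:ℝ) = 2 * w := by rw [hwdef]; ring
  have hd0 : 0 < d := by rw [hd]; positivity
  have h2p1 : (2:ℝ)^((1:ℤ) - 8*(s:ℤ)) ≤ 1 :=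
    zpow_le_one_of_nonpos₀ one_le_two (by
      have h32 : (32:ℤ) ≤ (s:ℤ) := by exact_mod_cast hs
      omega)
  have hdw : d ≤ w := by
    rw [hd, hwdef]
    gcongr
  have hζpos : 0 < ζ₃ := by rw [hζ₃, h2w]; linarith
  have hζne : ζ₃ ≠ 0 := ne_of_gt hζpos
  -- the potential function Λ and the assembled derivative D, E
  obtain ⟨D, hDdef⟩ : ∃ D : ℕ → ℝ → ℝ, D = fun j t =>
      if j = 8*s+1 then β (8*s) t - β (8*s+1) t * Γ t
      else if j = 1 then -(β 1 t) * R t + (α t / 2) * Γ t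
      else β (j-1) t - β j t * R t := ⟨_, rfl⟩
  have hDval : ∀ j t, D j t =
      if j = 8*s+1 then β (8*s) t - β (8*s+1) t * Γ t
      else if j = 1 then -(β 1 t) * R t + (α t / 2) * Γ t
      else β (j-1) t - β j t * R t := fun j t => by rw [hDdef]
  obtain ⟨Λ, hΛdef⟩ : ∃ Λ : ℝ → ℝ, Λ = fun t =>
      α t + d * δ t + ∑ j ∈ Finset.Icc 1 (8*s+1), a j * β j t := ⟨_, rfl⟩
  have hΛval : ∀ t, Λ t = α t + d * δ t + ∑ j ∈ Finset.Icc 1 (8*s+1), a j * β j t :=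
    fun t => by rw [hΛdef]
  obtain ⟨E, hEdef⟩ : ∃ E : ℝ → ℝ, ∀ t, E t =
      (-(α t / 2) * (Γ t - B t) + δ t * B t)
      + d * ((α t / 2) * (Γ t - B t) + ((1/(s:ℝ) - α t - δ t)/2) * B t - δ t * Γ t)
      + ∑ j ∈ Finset.Icc 1 (8*s+1), a j * D j t := ⟨_, fun _ => rfl⟩
  -- Λ has derivative E
  have hΛderiv : ∀ t : ℝ, 0 ≤ t → HasDerivAt Λ (E t) t := by
    intro t ht
    rw [hΛdef, hEdef]
    refine ((hderivα t ht).add ((hderivδ t ht).const_mul d)).add (HasDerivAt.fun_sum ?_)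
    intro j hj
    obtain ⟨hj1, hj2⟩ := Finset.mem_Icc.1 hj
    by_cases h1 : j = 8*s+1
    · subst h1
      rw [hDval, if_pos rfl]
      exact (hderivβlast t ht).const_mul _
    by_cases h2 : j = 1
    · subst h2
      rw [hDval, if_neg (by omega), if_pos rfl]
      exact (hderivβ1 t ht).const_mul _
    · rw [hDval, if_neg h1, if_neg h2]
      exact (hderivβ j (by omega) (by omega) t ht).const_mul _
  -- generic bottom-splitting of Icc 1 (8s)
  have hsplit1 : ∀ f : ℕ → ℝ, ∑ j ∈ Finset.Icc 1 (8*s), f j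
      = f 1 + ∑ j ∈ Finset.Icc 2 (8*s), f j := by
    intro f
    have h1 : (1:ℕ) ∈ Finset.Icc 1 (8*s) := Finset.mem_Icc.2 ⟨le_rfl, by omega⟩
    rw [← Finset.add_sum_erase _ f h1]
    congr 1
    rw [Finset.Icc_erase_left]
    rw [show Finset.Icc 2 (8*s) = Finset.Icc (1+1) (8*s) by norm_num, Finset.Icc_add_one_left_eq_Ioc]
  -- half-step relation for a
  have ha' : ∀ j, 1 ≤ j → j ≤ 8*s → a (j+1) = a j / 2 := by
    intro j h1 h2
    rw [ha (j+1) (by omega) (by omega), ha j h1 (by omega)]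
    rw [show ((1:ℤ) - (↑(j+1):ℤ)) = (1 - (j:ℤ)) + (-1) by push_cast; ring,
      zpow_add₀ (two_ne_zero), zpow_neg_one]
    ring
  -- key differential inequality
  have hkey : ∀ t : ℝ, T₂ ≤ t → E t + ζ₃ * Λ t ≤ 0 := by
    intro t ht
    have h0t : 0 ≤ t := le_trans hT₂ ht
    obtain ⟨hΓ1, hΓ2⟩ := hΓt t ht
    have hΓ1' : 1 - 2*w ≤ Γ t := by rw [← h2w]; exact hΓ1
    have hRge' : 1 + w/4 ≤ R t := by
      have h4 : (1:ℝ)/(4*(s:ℝ)) = w/4 := by rw [hwdef]; ring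
      have := hRt t ht
      linarith [h4 ▸ this]
    have hα0 := hαt t ht
    have hδ0 := hδt t ht
    have hβ0 : ∀ j, 1 ≤ j → j ≤ 8*s+1 → 0 ≤ β j t := hβt t ht
    have hB0 : 0 ≤ B t := by
      rw [hB]
      exact Finset.sum_nonneg fun j hj => hβ0 j (Finset.mem_Icc.1 hj).1
        (by have := (Finset.mem_Icc.1 hj).2; omega)
    have h2eq : (2:ℝ)^((2:ℤ) - 8*(s:ℤ)) = 2 * (2:ℝ)^((1:ℤ) - 8*(s:ℤ)) := by
      rw [show ((2:ℤ) - 8*(s:ℤ)) = 1 + (1 - 8*(s:ℤ)) by ring, zpow_add₀ (two_ne_zero), zpow_one]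
    have hB2d : B t ≤ 2 * d * w := by
      have h := hBt t ht
      have heq : (2:ℝ)^((2:ℤ) - 8*(s:ℤ)) / (s:ℝ)^2 = 2 * d * w := by
        rw [h2eq, hd, hwdef]; field_simp
      linarith [heq ▸ h]
    have hBw2 : B t ≤ w * w := by
      have h := hBt t ht
      have h1 : (2:ℝ)^((2:ℤ) - 8*(s:ℤ)) ≤ 1 :=
        zpow_le_one_of_nonpos₀ one_le_two (by
      have h32 : (32:ℤ) ≤ (s:ℤ) := by exact_mod_cast hs
      omega)
      have h2 : (2:ℝ)^((2:ℤ) - 8*(s:ℤ)) / (s:ℝ)^2 ≤ 1/(s:ℝ)^2 := by gcongr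
      have h3 : (1:ℝ)/(s:ℝ)^2 = w * w := by rw [hwdef]; field_simp
      exact h.trans (h2.trans_eq h3)
    have ha1 : a 1 = w := by
      rw [ha 1 le_rfl (by omega), hwdef]
      norm_num
    have e2 : ∑ j ∈ Finset.Icc 2 (8*s+1), a j * β (j-1) t
        = ∑ j ∈ Finset.Icc 1 (8*s), a j / 2 * β j t := by
      rw [show Finset.Icc 2 (8*s+1) = Finset.Icc (1+1) (8*s+1) by norm_num,
        ← Finset.map_add_right_Icc 1 (8*s) 1, Finset.sum_map]
      refine Finset.sum_congr rfl fun j hj => ?_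
      obtain ⟨h1, h2⟩ := Finset.mem_Icc.1 hj
      simp only [addRightEmbedding_apply]
      rw [Nat.add_sub_cancel, ha' j h1 h2]
    have hEsum : ∑ j ∈ Finset.Icc 1 (8*s+1), a j * D j t
        = (∑ j ∈ Finset.Icc 1 (8*s), a j * (1/2 - R t) * β j t)
          + a 1 * ((α t/2) * Γ t) - a (8*s+1) * (β (8*s+1) t * Γ t) := by
      rw [Finset.sum_Icc_succ_top (by omega : 1 ≤ 8*s+1)]
      rw [hsplit1 (fun j => a j * D j t)]
      have hD1 : D 1 t = -(β 1 t) * R t + (α t/2) * Γ t := by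
        rw [hDval, if_neg (by omega), if_pos rfl]
      have hDlast : D (8*s+1) t = β (8*s) t - β (8*s+1) t * Γ t := by
        rw [hDval, if_pos rfl]
      have hDmid : ∑ j ∈ Finset.Icc 2 (8*s), a j * D j t
          = (∑ j ∈ Finset.Icc 2 (8*s), a j * β (j-1) t)
            - ∑ j ∈ Finset.Icc 2 (8*s), a j * (β j t * R t) := by
        rw [← Finset.sum_sub_distrib]
        refine Finset.sum_congr rfl fun j hj => ?_
        obtain ⟨h1, h2⟩ := Finset.mem_Icc.1 hj
        rw [hDval, if_neg (by omega), if_neg (by omega)]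
        ring
      have e4 : (∑ j ∈ Finset.Icc 2 (8*s), a j * β (j-1) t) + a (8*s+1) * β ((8*s+1)-1) t
          = ∑ j ∈ Finset.Icc 1 (8*s), a j / 2 * β j t := by
        rw [← e2, Finset.sum_Icc_succ_top (by omega : 2 ≤ 8*s+1)]
      have e4' : (∑ j ∈ Finset.Icc 2 (8*s), a j * β (j-1) t) + a (8*s+1) * β (8*s) t
          = ∑ j ∈ Finset.Icc 1 (8*s), a j / 2 * β j t := by
        rw [← e4]
        norm_num
      have e5 : a 1 * (β 1 t * R t) + ∑ j ∈ Finset.Icc 2 (8*s), a j * (β j t * R t)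
          = ∑ j ∈ Finset.Icc 1 (8*s), a j * (β j t * R t) :=
        (hsplit1 (fun j => a j * (β j t * R t))).symm
      have e1 : ∑ j ∈ Finset.Icc 1 (8*s), a j * (1/2 - R t) * β j t
          = (∑ j ∈ Finset.Icc 1 (8*s), a j / 2 * β j t)
            - ∑ j ∈ Finset.Icc 1 (8*s), a j * (β j t * R t) := by
        rw [← Finset.sum_sub_distrib]
        exact Finset.sum_congr rfl fun j _ => by ring
      rw [hD1, hDlast, hDmid]
      linear_combination e4' - e5 - e1
    -- decompose Λ
    have hΛsplit : Λ t = α t + d * δ t + (∑ j ∈ Finset.Icc 1 (8*s), a j * β j t)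
        + a (8*s+1) * β (8*s+1) t := by
      rw [hΛval, Finset.sum_Icc_succ_top (by omega : 1 ≤ 8*s+1)]
      ring
    -- the grand identity
    have hfuse : ∑ j ∈ Finset.Icc 1 (8*s),
        ((a j * (1/2 - R t) + ζ₃ * a j + d * w / 2) * β j t)
        = (∑ j ∈ Finset.Icc 1 (8*s), a j * (1/2 - R t) * β j t)
          + ζ₃ * (∑ j ∈ Finset.Icc 1 (8*s), a j * β j t)
          + d * w / 2 * (∑ j ∈ Finset.Icc 1 (8*s), β j t) := by
      rw [Finset.mul_sum, Finset.mul_sum, ← Finset.sum_add_distrib, ← Finset.sum_add_distrib]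
      exact Finset.sum_congr rfl fun j _ => by ring
    have hkeyid : E t + ζ₃ * Λ t =
        ((-(Γ t - B t)/2 + d * (Γ t - B t)/2 - d * B t/2 + w * Γ t/2 + ζ₃) * α t
          + (B t - d * B t/2 - d * Γ t + ζ₃ * d) * δ t)
        + (∑ j ∈ Finset.Icc 1 (8*s),
            ((a j * (1/2 - R t) + ζ₃ * a j + d * w / 2) * β j t))
        + (ζ₃ - Γ t) * (a (8*s+1) * β (8*s+1) t) := by
      rw [hEdef, hEsum, hΛsplit, hfuse, ha1, ← hwdef]
      rw [hB t]
      ring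
    -- bound each group
    have hCα : -(Γ t - B t)/2 + d * (Γ t - B t)/2 - d * B t/2 + w * Γ t/2 + ζ₃ ≤ 0 := by
      rw [hζ₃, h2w]
      have hf1 : (0:ℝ) ≤ 1 - d - w := by linarith
      nlinarith [mul_nonneg (sub_nonneg.2 hΓ1') hf1,
        mul_nonneg hd0.le hB0, mul_nonneg hd0.le hw0.le,
        mul_nonneg (sub_nonneg.2 hdw) hw0.le]
    have hCδ : B t - d * B t/2 - d * Γ t + ζ₃ * d ≤ 0 := by
      rw [hζ₃, h2w]
      nlinarith [mul_nonneg hd0.le hB0, mul_le_mul_of_nonneg_left hΓ1' hd0.le,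
        mul_nonneg hd0.le hw0.le]
    have hsum_le : ∑ j ∈ Finset.Icc 1 (8*s),
        ((a j * (1/2 - R t) + ζ₃ * a j + d * w / 2) * β j t) ≤ 0 := by
      refine Finset.sum_nonpos fun j hj => ?_
      obtain ⟨h1, h2⟩ := Finset.mem_Icc.1 hj
      have haj : a j = (2:ℝ)^((1:ℤ) - (j:ℤ)) / (s:ℝ) := ha j h1 (by omega)
      have haj0 : 0 < a j := by rw [haj]; positivity
      have hajd : d ≤ a j := by
        rw [haj, hd]
        gcongr
        · exact one_le_two
        · have : (j:ℤ) ≤ 8*(s:ℤ) := by exact_mod_cast h2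
          omega
      have hβj : 0 ≤ β j t := hβ0 j h1 (by omega)
      have hc : a j * (1/2 - R t) + ζ₃ * a j + d * w / 2 ≤ 0 := by
        rw [hζ₃, h2w]
        nlinarith [mul_le_mul_of_nonneg_left hRge' haj0.le,
          mul_le_mul_of_nonneg_right hajd hw0.le, mul_nonneg haj0.le hw0.le]
      calc (a j * (1/2 - R t) + ζ₃ * a j + d * w / 2) * β j t
          ≤ 0 * β j t := mul_le_mul_of_nonneg_right hc hβj
        _ = 0 := by ring
    have hlastterm : (ζ₃ - Γ t) * (a (8*s+1) * β (8*s+1) t) ≤ 0 := by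
      have h1 : ζ₃ - Γ t ≤ 0 := by rw [hζ₃, h2w]; linarith
      have h2 : 0 ≤ a (8*s+1) * β (8*s+1) t := by
        have hval := ha (8*s+1) (by omega) le_rfl
        have ha0 : 0 ≤ a (8*s+1) := by rw [hval]; positivity
        exact mul_nonneg ha0 (hβ0 _ (by omega) le_rfl)
      exact mul_nonpos_of_nonpos_of_nonneg h1 h2
    have hXα : (-(Γ t - B t)/2 + d * (Γ t - B t)/2 - d * B t/2 + w * Γ t/2 + ζ₃) * α t ≤ 0 :=
      mul_nonpos_of_nonpos_of_nonneg hCα hα0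
    have hXδ : (B t - d * B t/2 - d * Γ t + ζ₃ * d) * δ t ≤ 0 :=
      mul_nonpos_of_nonpos_of_nonneg hCδ hδ0
    linarith [hkeyid, hXα, hXδ, hsum_le, hlastterm]
  -- Grönwall via the exponential trick
  set T₃ : ℝ := T₂ + ((1+θ)/ζ₃) * Real.log n with hT₃def
  have hlogn : 0 < Real.log n := Real.log_pos hn
  have hT₃ge : T₂ ≤ T₃ := by
    have h : 0 ≤ ((1+θ)/ζ₃) * Real.log n := by positivity
    rw [hT₃def]; linarith
  have hgderiv : ∀ t : ℝ, 0 ≤ t →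
      HasDerivAt (fun t => Λ t * Real.exp (ζ₃ * (t - T₂)))
        (E t * Real.exp (ζ₃ * (t - T₂)) + Λ t * (Real.exp (ζ₃ * (t - T₂)) * ζ₃)) t := by
    intro t ht
    have hlin : HasDerivAt (fun x : ℝ => ζ₃ * (x - T₂)) ζ₃ t := by
      simpa using ((hasDerivAt_id t).sub_const T₂).const_mul ζ₃
    exact (hΛderiv t ht).mul hlin.exp
  have hanti : AntitoneOn (fun t => Λ t * Real.exp (ζ₃ * (t - T₂))) (Set.Ici T₂) := by
    apply antitoneOn_of_deriv_nonpos (convex_Ici T₂)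
    · intro t ht
      exact ((hgderiv t (le_trans hT₂ ht)).continuousAt).continuousWithinAt
    · intro t ht
      rw [interior_Ici] at ht
      exact ((hgderiv t (le_trans hT₂ (le_of_lt ht))).differentiableAt).differentiableWithinAt
    · intro t ht
      rw [interior_Ici] at ht
      have hd1 := hgderiv t (le_trans hT₂ (le_of_lt ht))
      rw [hd1.deriv]
      have h1 : E t + ζ₃ * Λ t ≤ 0 := hkey t (le_of_lt ht)
      have h2 : E t * Real.exp (ζ₃ * (t - T₂)) + Λ t * (Real.exp (ζ₃ * (t - T₂)) * ζ₃)
          = (E t + ζ₃ * Λ t) * Real.exp (ζ₃ * (t - T₂)) := by ring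
      rw [h2]
      exact mul_nonpos_of_nonpos_of_nonneg h1 (Real.exp_pos _).le
  have hgle : Λ T₃ * Real.exp (ζ₃ * (T₃ - T₂)) ≤ Λ T₂ * Real.exp (ζ₃ * (T₂ - T₂)) :=
    hanti Set.self_mem_Ici (Set.mem_Ici.2 hT₃ge) hT₃ge
  have hΛT₂ : Λ T₂ ≤ 1 := by rw [hΛval]; exact hΛ₃T₂
  have hexpeq : ζ₃ * (T₃ - T₂) = (1+θ) * Real.log n := by
    rw [hT₃def]
    field_simp
    ring
  have h1 : Λ T₃ * Real.exp ((1+θ) * Real.log n) ≤ 1 := by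
    rw [← hexpeq]
    have : Λ T₂ * Real.exp (ζ₃ * (T₂ - T₂)) = Λ T₂ := by simp
    linarith [hgle, this ▸ hΛT₂]
  have hΛT₃ : Λ T₃ ≤ n ^ (-1 - θ) := by
    have h2 : (0:ℝ) < Real.exp ((1+θ) * Real.log n) := Real.exp_pos _
    have h3 : Λ T₃ ≤ 1 / Real.exp ((1+θ) * Real.log n) := by
      rw [le_div_iff₀ h2]; exact h1
    have h4 : (1:ℝ) / Real.exp ((1+θ) * Real.log n) = n ^ (-1 - θ) := by
      rw [Real.rpow_def_of_pos (by linarith : (0:ℝ) < n), one_div, ← Real.exp_neg]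
      congr 1
      ring
    linarith [h3.trans_eq h4]
  -- final comparison
  have hnp : (0:ℝ) < n ^ (-1 - θ) := Real.rpow_pos_of_pos (by linarith) _
  have hβ0' : ∀ j, 1 ≤ j → j ≤ 8*s+1 → 0 ≤ β j T₃ := hβt T₃ hT₃ge
  have h2pow : (1:ℝ) ≤ (2:ℝ)^(8*s) := one_le_pow₀ one_le_two
  have hK1 : (1:ℝ) ≤ (s:ℝ) * 2^(8*s) := by nlinarith
  have hsumK : ∑ j ∈ Finset.Icc 1 (8*s+1), β j T₃
      ≤ (s:ℝ) * 2^(8*s) * ∑ j ∈ Finset.Icc 1 (8*s+1), a j * β j T₃ := by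
    rw [Finset.mul_sum]
    refine Finset.sum_le_sum fun j hj => ?_
    obtain ⟨h1, h2⟩ := Finset.mem_Icc.1 hj
    have haj : a j = (2:ℝ)^((1:ℤ) - (j:ℤ)) / (s:ℝ) := ha j h1 h2
    have hKa : (1:ℝ) ≤ (s:ℝ) * 2^(8*s) * a j := by
      rw [haj]
      have hcalc : (s:ℝ) * 2^(8*s) * ((2:ℝ)^((1:ℤ) - (j:ℤ)) / (s:ℝ))
          = (2:ℝ)^((8*(s:ℤ)) + (1 - (j:ℤ))) := by
        rw [zpow_add₀ (two_ne_zero), ← zpow_natCast (2:ℝ) (8*s)]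
        push_cast
        field_simp
      rw [hcalc]
      refine one_le_zpow₀ one_le_two ?_
      have : (j:ℤ) ≤ 8*(s:ℤ) + 1 := by exact_mod_cast h2
      omega
    calc β j T₃ = 1 * β j T₃ := (one_mul _).symm
      _ ≤ ((s:ℝ) * 2^(8*s) * a j) * β j T₃ :=
          mul_le_mul_of_nonneg_right hKa (hβ0' j h1 h2)
      _ = (s:ℝ) * 2^(8*s) * (a j * β j T₃) := by ring
  have hBβ : B T₃ + β (8*s+1) T₃ = ∑ j ∈ Finset.Icc 1 (8*s+1), β j T₃ := by
    rw [hB, Finset.sum_Icc_succ_top (by omega : 1 ≤ 8*s+1)]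
  have hαK : α T₃ ≤ (s:ℝ) * 2^(8*s) * α T₃ := by
    nlinarith [hαt T₃ hT₃ge]
  have hdδK : 0 ≤ (s:ℝ) * 2^(8*s) * (d * δ T₃) :=
    mul_nonneg (by positivity) (mul_nonneg hd0.le (hδt T₃ hT₃ge))
  have htotal : α T₃ + B T₃ + β (8*s+1) T₃ ≤ (s:ℝ) * 2^(8*s) * Λ T₃ := by
    have hv := hΛval T₃
    nlinarith [hαK, hdδK, hsumK, hBβ]
  have hfin : (s:ℝ) * 2^(8*s) * Λ T₃ ≤ (s:ℝ) * 2^(8*s) * (n ^ (-1-θ)) :=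
    mul_le_mul_of_nonneg_left hΛT₃ (by positivity)
  have hpow : (2:ℝ)^(8*s+1) = 2 * (2:ℝ)^(8*s) := by rw [pow_succ]; ring
  calc α T₃ + B T₃ + β (8*s+1) T₃ ≤ (s:ℝ) * 2^(8*s) * (n ^ (-1-θ)) := htotal.trans hfin
    _ ≤ n ^ (-1-θ) * (1 + (s:ℝ) * 2^(8*s+1)) := by
        rw [hpow]
        nlinarith [hnp, hK1, h2pow]
end

section
/- Let s ≥ 32 and ρ ∈ (0, 1/2). Assume the Phase-I standing bounds: for all t ≥ 0, 0 ≤ δ(t) ≤ 0.2/s, γ_j(t) > 0 for all 1 ≤ j ≤ 8s, γ_{j−1}(t)/γ_j(t) ≥ 1/2 for all 2 ≤ j ≤ 8s, γ_1(t) ≤ 1/s, 1 − 2/s ≤ Γ(t) ≤ 1, 1/s − δ(t) > 0, and Φ is nondecreasing on [0,∞) with Φ(0) = ρ. Then the time t* = 144·s·log₂(1/ρ) satisfies Φ(t*) ≥ 1/2. -/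
set_option maxHeartbeats 1000000

open Set Filter Topology

lemma slopeBarrier (N : ℕ) (V : ℕ → ℝ → ℝ) (a b c r : ℝ)
    (hab : a ≤ b)
    (hcont : ∀ i ≤ N, ContinuousOn (V i) (Set.Icc a b))
    (hinit : ∀ i ≤ N, c ≤ V i a)
    (hcontact : ∀ t, t ∈ Set.Ico a b → (∀ i ≤ N, c + r * (t - a) ≤ V i t) →
      ∀ i ≤ N, V i t = c + r * (t - a) → ∃ vv, HasDerivAt (V i) vv t ∧ r < vv) :
    ∀ t ∈ Set.Icc a b, ∀ i ≤ N, c + r * (t - a) ≤ V i t := by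
  set L : ℝ → ℝ := fun u => c + r * (u - a) with hLdef
  have hLcont : Continuous L := by fun_prop
  set G : Set ℝ := {t | t ∈ Set.Icc a b ∧ ∀ u ∈ Set.Icc a t, ∀ i ≤ N, L u ≤ V i u} with hGdef
  have hamem : a ∈ G := by
    refine ⟨⟨le_refl a, hab⟩, fun u hu i hi => ?_⟩
    have hua : u = a := le_antisymm hu.2 hu.1
    subst hua
    simpa [hLdef] using hinit i hi
  have hGne : G.Nonempty := ⟨a, hamem⟩
  have hGbdd : BddAbove G := ⟨b, fun x hx => hx.1.2⟩
  set T := sSup G with hTdef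
  have haT : a ≤ T := le_csSup hGbdd hamem
  have hTb : T ≤ b := csSup_le hGne (fun x hx => hx.1.2)
  have hgood : ∀ u, a ≤ u → u < T → ∀ i ≤ N, L u ≤ V i u := by
    intro u hau huT i hi
    obtain ⟨t', ht'G, ht'⟩ := exists_lt_of_lt_csSup hGne huT
    exact ht'G.2 u ⟨hau, le_of_lt ht'⟩ i hi
  have hTgood : ∀ i ≤ N, L T ≤ V i T := by
    intro i hi
    rcases eq_or_lt_of_le haT with heq | hlt
    · rw [← heq]
      simpa [hLdef] using hinit i hi
    · haveI hne : (𝓝[Set.Ico a T] T).NeBot := by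
        apply mem_closure_iff_nhdsWithin_neBot.mp
        rw [closure_Ico (ne_of_lt hlt)]
        exact ⟨haT, le_refl T⟩
      have hsub : Set.Ico a T ⊆ Set.Icc a b := fun x hx => ⟨hx.1, le_trans hx.2.le hTb⟩
      have h1 : Filter.Tendsto (V i) (𝓝[Set.Ico a T] T) (𝓝 (V i T)) :=
        (hcont i hi T ⟨haT, hTb⟩).mono_left (nhdsWithin_mono _ hsub)
      have h2 : Filter.Tendsto L (𝓝[Set.Ico a T] T) (𝓝 (L T)) :=
        (hLcont.tendsto T).mono_left nhdsWithin_le_nhds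
      refine le_of_tendsto_of_tendsto h2 h1 ?_
      filter_upwards [self_mem_nhdsWithin] with u hu
      exact hgood u hu.1 hu.2 i hi
  have hTG : T ∈ G := by
    refine ⟨⟨haT, hTb⟩, fun u hu i hi => ?_⟩
    rcases lt_or_eq_of_le hu.2 with h | h
    · exact hgood u hu.1 h i hi
    · rw [h]; exact hTgood i hi
  rcases eq_or_lt_of_le hTb with hTeq | hTlt
  · intro t ht i hi
    exact hTG.2 t ⟨ht.1, hTeq ▸ ht.2⟩ i hi
  · exfalso
    haveI hne2 : (𝓝[Set.Ioc T b] T).NeBot := by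
      apply mem_closure_iff_nhdsWithin_neBot.mp
      rw [closure_Ioc (ne_of_lt hTlt)]
      exact ⟨le_refl T, hTb⟩
    have hsub2 : Set.Ioc T b ⊆ Set.Icc a b := fun x hx => ⟨le_trans haT hx.1.le, hx.2⟩
    have ev : ∀ i ≤ N, ∀ᶠ u in 𝓝[Set.Ioc T b] T, L u ≤ V i u := by
      intro i hi
      rcases lt_or_eq_of_le (hTgood i hi) with h | h
      · have h1 : Filter.Tendsto (fun u => V i u - L u) (𝓝[Set.Ioc T b] T) (𝓝 (V i T - L T)) := by
          exact Filter.Tendsto.sub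
            ((hcont i hi T ⟨haT, hTb⟩).mono_left (nhdsWithin_mono _ hsub2))
            ((hLcont.tendsto T).mono_left nhdsWithin_le_nhds)
        have h2 : ∀ᶠ u in 𝓝[Set.Ioc T b] T, 0 < V i u - L u :=
          h1.eventually (eventually_gt_nhds (by linarith))
        exact h2.mono (fun u hu => by linarith)
      · obtain ⟨vv, hd, hrv⟩ := hcontact T ⟨haT, hTlt⟩
          (fun i' hi' => hTgood i' hi') i hi h.symm
        have hslope : Filter.Tendsto (slope (V i) T) (𝓝[≠] T) (𝓝 vv) :=
          hasDerivAt_iff_tendsto_slope.mp hd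
        have hle : 𝓝[Set.Ioc T b] T ≤ 𝓝[≠] T :=
          nhdsWithin_mono _ (fun x hx => ne_of_gt hx.1)
        have h2 : ∀ᶠ u in 𝓝[Set.Ioc T b] T, r < slope (V i) T u :=
          (hslope.mono_left hle).eventually (eventually_gt_nhds hrv)
        have h3 : ∀ᶠ u in 𝓝[Set.Ioc T b] T, u ∈ Set.Ioc T b := self_mem_nhdsWithin
        filter_upwards [h2, h3] with u hu1 hu2
        have hut : 0 < u - T := sub_pos.mpr hu2.1
        have hkey : r * (u - T) < V i u - V i T := by
          rw [slope_def_field] at hu1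
          exact (lt_div_iff₀ hut).mp hu1
        have hLu : L u = L T + r * (u - T) := by simp [hLdef]; ring
        rw [hLu]
        linarith
    have hall : ∀ᶠ u in 𝓝[Set.Ioc T b] T, ∀ i ∈ Finset.range (N+1), L u ≤ V i u :=
      (Finset.eventually_all _).mpr (fun i hi => ev i (Nat.lt_succ_iff.mp (Finset.mem_range.mp hi)))
    obtain ⟨ε, hε, hsubs⟩ := Metric.mem_nhdsWithin_iff.mp hall
    set t' := min (T + ε/2) b with ht'def
    have hTt' : T < t' := lt_min (by linarith) hTlt
    have ht'G : t' ∈ G := by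
      refine ⟨⟨le_trans haT hTt'.le, min_le_right _ _⟩, fun u hu i hi => ?_⟩
      rcases le_or_gt u T with h | h
      · rcases lt_or_eq_of_le h with h' | h'
        · exact hgood u hu.1 h' i hi
        · rw [h']; exact hTgood i hi
      · have hu1 : u ∈ Metric.ball T ε := by
          rw [Metric.mem_ball, Real.dist_eq, abs_of_pos (by linarith)]
          have : u ≤ T + ε/2 := le_trans hu.2 (min_le_left _ _)
          linarith
        have hu2 : u ∈ Set.Ioc T b := ⟨h, le_trans hu.2 (min_le_right _ _)⟩
        exact hsubs ⟨hu1, hu2⟩ i (Finset.mem_range.mpr (Nat.lt_succ_iff.mpr hi))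
    have : t' ≤ T := le_csSup hGbdd ht'G
    linarith

lemma aux0 (SS m x e G d DD : ℝ) (hSS : 32 ≤ SS) (hm0 : 0 < m) (hm1 : m < 1/2)
    (hx1 : m ≤ x) (hx2 : x ≤ 13/20) (he : x - 3*m/10 ≤ e)
    (hG1 : 15/16 ≤ G) (hG2 : G ≤ 1) (hd0 : 0 ≤ d) (hd1 : 5*d*SS ≤ 1)
    (hDD : 4 ≤ 5*DD*SS) (hDpos : 0 < DD) :
    m/(80*SS) < (G/4)*(1-x^2)*e + (d*G/DD)*(e-x) := by
  have hSS0 : (0:ℝ) < SS := by linarith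
  have hq4 : d*G/DD ≤ 1/4 := by
    rw [div_le_iff₀ hDpos]
    have h1 : d*G ≤ d := by nlinarith
    have h2 : 4*d ≤ DD := by
      rcases le_or_gt (4*d) DD with h | h
      · exact h
      · exfalso; nlinarith [mul_lt_mul_of_pos_right h hSS0]
    linarith
  have hq0 : 0 ≤ d*G/DD := by positivity
  have he7 : 7*m/10 ≤ e := by linarith
  have hterm2 : -(3*m/40) ≤ (d*G/DD)*(e-x) := by
    rcases le_or_gt x e with h | h
    · nlinarith [mul_nonneg hq0 (sub_nonneg.mpr h)]
    · nlinarith [mul_nonneg (sub_nonneg.mpr hq4) (sub_nonneg.mpr h.le)]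
  have hterm1 : (15:ℝ)/64 * (231/400*(7*m/10)) ≤ (G/4)*((1-x^2)*e) := by
    have h1 : (231:ℝ)/400 ≤ 1-x^2 := by nlinarith
    have h2 : (0:ℝ) < 7*m/10 := by linarith
    have h3 : (15:ℝ)/64 ≤ G/4 := by linarith
    have h4 : (231:ℝ)/400*(7*m/10) ≤ (1-x^2)*e := mul_le_mul h1 he7 h2.le (by linarith)
    exact mul_le_mul h3 h4 (by positivity) (by linarith)
  have hr : m/(80*SS) ≤ m/2560 := by
    apply div_le_div_of_nonneg_left hm0.le (by norm_num)
    linarith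
  nlinarith [hterm1, hterm2, hr]

lemma aux1 (SS m x ξv ηv G DD g1 : ℝ) (hSS : 32 ≤ SS) (hm0 : 0 < m)
    (hξx : x ≤ ξv) (hηv : ηv = x - 3*(m/(80*SS)))
    (hG1 : 15/16 ≤ G) (hDD : 4 ≤ 5*DD*SS) (hDpos : 0 < DD)
    (hg0 : 0 < g1) (hg1 : g1*SS ≤ 1) :
    m/(80*SS) < (G*DD/(2*g1))*(ξv - ηv) := by
  have hSS0 : (0:ℝ) < SS := by linarith
  have hrpos : 0 < m/(80*SS) := by positivity
  have hcoef : (3:ℝ)/8 ≤ G*DD/(2*g1) := by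
    rw [le_div_iff₀ (by positivity)]
    rcases le_or_gt (3/8*(2*g1)) (G*DD) with h | h
    · exact h
    · exfalso
      have := mul_lt_mul_of_pos_right h hSS0
      nlinarith [mul_nonneg (sub_nonneg.mpr hG1) (mul_pos hDpos hSS0).le]
  have hgap : 3*(m/(80*SS)) ≤ ξv - ηv := by rw [hηv]; linarith
  have h5 := mul_le_mul hcoef hgap (by positivity) (by linarith)
  nlinarith [h5]

lemma auxj (r c gap : ℝ) (hr : 0 < r) (hc : 1/2 ≤ c) (hgap : 3*r ≤ gap) : r < c*gap := by
  nlinarith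

theorem stmt_17
    (s : ℕ) (hs : 32 ≤ s)
    (α δ : ℝ → ℝ) (β γ : ℕ → ℝ → ℝ) (B Γ u R : ℝ → ℝ)
    (hB : ∀ t, B t = ∑ j ∈ Finset.Icc 1 (8*s), β j t)
    (hΓ : ∀ t, Γ t = ∑ j ∈ Finset.Icc 1 (8*s), γ j t)
    (hu : ∀ t, u t = 1 - 1/(s:ℝ) - Γ t)
    (hR : ∀ t, R t = 1 + 1/(2*(s:ℝ)) - δ t / 2 - u t)
    (hderivα : ∀ t : ℝ, 0 ≤ t → HasDerivAt α (-(α t / 2) * (Γ t - B t) + δ t * B t) t)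
    (hderivδ : ∀ t : ℝ, 0 ≤ t →
      HasDerivAt δ ((α t / 2) * (Γ t - B t) + ((1/(s:ℝ) - α t - δ t)/2) * B t - δ t * Γ t) t)
    (hderivβ1 : ∀ t : ℝ, 0 ≤ t → HasDerivAt (β 1) (-(β 1 t) * R t + (α t / 2) * Γ t) t)
    (hderivβ : ∀ j, 2 ≤ j → j ≤ 8*s → ∀ t : ℝ, 0 ≤ t →
      HasDerivAt (β j) (β (j-1) t - β j t * R t) t)
    (hderivγ1 : ∀ t : ℝ, 0 ≤ t →
      HasDerivAt (γ 1) (-(γ 1 t) * R t + (1/(2*(s:ℝ)) - δ t / 2) * Γ t) t)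
    (hderivγ : ∀ j, 2 ≤ j → j ≤ 8*s → ∀ t : ℝ, 0 ≤ t →
      HasDerivAt (γ j) (γ (j-1) t - γ j t * R t) t)
    (ξ η : ℝ → ℝ) (ηj : ℕ → ℝ → ℝ)
    (hξ : ∀ t, ξ t = (1/(s:ℝ) - δ t - 2 * α t) / (1/(s:ℝ) - δ t))
    (hηj : ∀ j, 1 ≤ j → j ≤ 8*s → ∀ t, ηj j t = (γ j t - 2 * β j t) / γ j t)
    (hη : ∀ t, η t = (Γ t - 2 * B t) / Γ t)
    (ρ : ℝ) (hρ : 0 < ρ) (hρ' : ρ < 1/2)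
    (Φ : ℝ → ℝ)
    (hΦ : ∀ t, Φ t = min (ξ t)
      ((Finset.Icc 1 (8*s)).inf' (Finset.nonempty_Icc.mpr (by omega)) (fun j => ηj j t)))
    (hδb : ∀ t : ℝ, 0 ≤ t → 0 ≤ δ t ∧ δ t ≤ 0.2 / (s:ℝ))
    (hγpos : ∀ t : ℝ, 0 ≤ t → ∀ j, 1 ≤ j → j ≤ 8*s → 0 < γ j t)
    (hγratio : ∀ t : ℝ, 0 ≤ t → ∀ j, 2 ≤ j → j ≤ 8*s → 1/2 ≤ γ (j-1) t / γ j t)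
    (hγ1b : ∀ t : ℝ, 0 ≤ t → γ 1 t ≤ 1/(s:ℝ))
    (hΓb : ∀ t : ℝ, 0 ≤ t → 1 - 2/(s:ℝ) ≤ Γ t ∧ Γ t ≤ 1)
    (hδlt : ∀ t : ℝ, 0 ≤ t → 0 < 1/(s:ℝ) - δ t)
    (hmono : MonotoneOn Φ (Set.Ici (0:ℝ)))
    (hΦ0 : Φ 0 = ρ) :
    1/2 ≤ Φ (144 * (s:ℝ) * Real.logb 2 (1/ρ)) := by
  have h8s1 : 1 ≤ 8*s := by omega
  have hS32 : (32:ℝ) ≤ (s:ℝ) := by exact_mod_cast hs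
  have hSpos : (0:ℝ) < (s:ℝ) := by linarith
  have hSne : (s:ℝ) ≠ 0 := by linarith
  have hΓlb : ∀ t : ℝ, 0 ≤ t → (15:ℝ)/16 ≤ Γ t := by
    intro t ht
    have h1 := (hΓb t ht).1
    have h2 : (2:ℝ)/(s:ℝ) ≤ 1/16 := by
      rw [div_le_iff₀ hSpos]; linarith
    linarith
  have hΓpos : ∀ t : ℝ, 0 ≤ t → 0 < Γ t := fun t ht => lt_of_lt_of_le (by norm_num) (hΓlb t ht)
  -- extraction from Φ
  have hΦleξ : ∀ t, Φ t ≤ ξ t := by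
    intro t; rw [hΦ t]; exact min_le_left _ _
  have hΦleη : ∀ t, ∀ j, 1 ≤ j → j ≤ 8*s → Φ t ≤ ηj j t := by
    intro t j h1 h2; rw [hΦ t]
    exact le_trans (min_le_right _ _) (Finset.inf'_le _ (Finset.mem_Icc.mpr ⟨h1, h2⟩))
  have hΦge : ∀ t x, x ≤ ξ t → (∀ j, 1 ≤ j → j ≤ 8*s → x ≤ ηj j t) → x ≤ Φ t := by
    intro t x h1 h2; rw [hΦ t]
    refine le_min h1 (Finset.le_inf' _ _ (fun j hj => ?_))
    exact h2 j (Finset.mem_Icc.mp hj).1 (Finset.mem_Icc.mp hj).2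
  -- sqrt 2 bounds
  have hs2a : (1:ℝ) < Real.sqrt 2 := by
    nlinarith [Real.sq_sqrt (show (0:ℝ) ≤ 2 by norm_num), Real.sqrt_nonneg 2]
  have hs2b : Real.sqrt 2 ≤ 1.42 := by
    nlinarith [Real.sq_sqrt (show (0:ℝ) ≤ 2 by norm_num), Real.sqrt_nonneg 2]
  -- derivative of ξ
  have hξd : ∀ t : ℝ, 0 ≤ t → ∀ xv, xv = (1/(s:ℝ) - δ t - 2 * α t) / (1/(s:ℝ) - δ t) →
      HasDerivAt ξ ((Γ t/4) * (1 - xv^2) * ((Γ t - 2*B t)/Γ t)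
        + (δ t * Γ t / (1/(s:ℝ) - δ t)) * ((Γ t - 2*B t)/Γ t - xv)) t := by
    intro t ht xv hxv
    have hD := hδlt t ht
    have hG := hΓpos t ht
    have h1 : HasDerivAt (fun u => 1/(s:ℝ) - δ u - 2 * α u)
        (0 - ((α t / 2) * (Γ t - B t) + ((1/(s:ℝ) - α t - δ t)/2) * B t - δ t * Γ t)
          - 2 * (-(α t / 2) * (Γ t - B t) + δ t * B t)) t :=
      (((hasDerivAt_const t (1/(s:ℝ))).sub (hderivδ t ht)).sub ((hderivα t ht).const_mul 2))
    have h2 : HasDerivAt (fun u => 1/(s:ℝ) - δ u)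
        (0 - ((α t / 2) * (Γ t - B t) + ((1/(s:ℝ) - α t - δ t)/2) * B t - δ t * Γ t)) t :=
      (hasDerivAt_const t (1/(s:ℝ))).sub (hderivδ t ht)
    have h3 := h1.div h2 (ne_of_gt hD)
    have hfun : ξ = fun u => (1/(s:ℝ) - δ u - 2 * α u) / (1/(s:ℝ) - δ u) := funext hξ
    rw [hfun]
    refine h3.congr_deriv ?_
    subst hxv
    have hsδ : (0:ℝ) < 1 - (s:ℝ)*δ t := by
      have h := mul_pos hSpos hD
      have h2' : (s:ℝ)*(1/(s:ℝ) - δ t) = 1 - (s:ℝ)*δ t := by field_simp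
      linarith [h2' ▸ h]
    have hne1 : Γ t ≠ 0 := ne_of_gt hG
    have hne2 : (1:ℝ)/(s:ℝ) - δ t ≠ 0 := ne_of_gt hD
    have hne3 : (1:ℝ) - (s:ℝ)*δ t ≠ 0 := ne_of_gt hsδ
    field_simp
    ring
  -- derivative of η1
  have hη1d : ∀ t : ℝ, 0 ≤ t → ∀ xv ev, xv = (1/(s:ℝ) - δ t - 2 * α t) / (1/(s:ℝ) - δ t) →
      ev = (γ 1 t - 2 * β 1 t) / γ 1 t →
      HasDerivAt (ηj 1) ((Γ t * (1/(s:ℝ) - δ t) / (2 * γ 1 t)) * (xv - ev)) t := by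
    intro t ht xv ev hxv hev
    have hg := hγpos t ht 1 le_rfl h8s1
    have h1 : HasDerivAt (fun u => γ 1 u - 2 * β 1 u)
        ((-(γ 1 t) * R t + (1/(2*(s:ℝ)) - δ t / 2) * Γ t)
          - 2 * (-(β 1 t) * R t + (α t / 2) * Γ t)) t :=
      (hderivγ1 t ht).sub ((hderivβ1 t ht).const_mul 2)
    have h3 := h1.div (hderivγ1 t ht) (ne_of_gt hg)
    have hfun : ηj 1 = fun u => (γ 1 u - 2 * β 1 u) / γ 1 u := funext (hηj 1 le_rfl h8s1)
    rw [hfun]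
    refine h3.congr_deriv ?_
    subst hxv hev
    have hD := hδlt t ht
    have hsδ : (0:ℝ) < 1 - (s:ℝ)*δ t := by
      have h := mul_pos hSpos hD
      have h2' : (s:ℝ)*(1/(s:ℝ) - δ t) = 1 - (s:ℝ)*δ t := by field_simp
      linarith [h2' ▸ h]
    have hne1 : γ 1 t ≠ 0 := ne_of_gt hg
    have hne2 : (1:ℝ)/(s:ℝ) - δ t ≠ 0 := ne_of_gt hD
    have hne3 : (1:ℝ) - (s:ℝ)*δ t ≠ 0 := ne_of_gt hsδ
    field_simp
    ring
  -- derivative of ηj, j ≥ 2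
  have hηjd : ∀ j, 2 ≤ j → j ≤ 8*s → ∀ t : ℝ, 0 ≤ t → ∀ e1 e2,
      e1 = (γ (j-1) t - 2 * β (j-1) t) / γ (j-1) t →
      e2 = (γ j t - 2 * β j t) / γ j t →
      HasDerivAt (ηj j) ((γ (j-1) t / γ j t) * (e1 - e2)) t := by
    intro j hj2 hj8 t ht e1 e2 he1 he2
    have hg := hγpos t ht j (by omega) hj8
    have h1 : HasDerivAt (fun u => γ j u - 2 * β j u)
        ((γ (j-1) t - γ j t * R t) - 2 * (β (j-1) t - β j t * R t)) t :=
      (hderivγ j hj2 hj8 t ht).sub ((hderivβ j hj2 hj8 t ht).const_mul 2)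
    have h3 := h1.div (hderivγ j hj2 hj8 t ht) (ne_of_gt hg)
    have hfun : ηj j = fun u => (γ j u - 2 * β j u) / γ j u := funext (hηj j (by omega) hj8)
    rw [hfun]
    refine h3.congr_deriv ?_
    subst he1 he2
    have hg' := hγpos t ht (j-1) (by omega) (by omega)
    have hne1 : γ j t ≠ 0 := ne_of_gt hg
    have hne2 : γ (j-1) t ≠ 0 := ne_of_gt hg'
    field_simp
    ring
  -- the doubling step
  have step : ∀ t₀ : ℝ, 0 ≤ t₀ → Φ t₀ < 1/2 → 0 < Φ t₀ →
      min (Real.sqrt 2 * Φ t₀) (1/2 : ℝ) ≤ Φ (t₀ + 72*(s:ℝ)) := by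
    intro t₀ ht₀ hmhalf hm0
    set m := Φ t₀ with hmdef
    set M := min (Real.sqrt 2 * m) (1/2 : ℝ) with hMdef
    have hMub : M ≤ Real.sqrt 2 * m := min_le_left _ _
    have hM2 : M ≤ 1/2 := min_le_right _ _
    have hmM : m < M := lt_min (by linarith [mul_lt_mul_of_pos_right hs2a hm0]) hmhalf
    set r := m/(80*(s:ℝ)) with hrdef
    have hrpos : 0 < r := by positivity
    set κ := 3*r with hκdef
    have hκpos : 0 < κ := by positivity
    set b := t₀ + (M - 7*m/10)/r with hbdef
    have hMm7 : 0 < M - 7*m/10 := by linarith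
    have hbt : t₀ ≤ b := by
      have h1 : 0 ≤ (M - 7*m/10)/r := div_nonneg hMm7.le hrpos.le
      rw [hbdef]; linarith
    have hrb : r*(b - t₀) = M - 7*m/10 := by
      have h1 : b - t₀ = (M - 7*m/10)/r := by rw [hbdef]; ring
      rw [h1, mul_div_cancel₀ _ (ne_of_gt hrpos)]
    have hb72 : b ≤ t₀ + 72*(s:ℝ) := by
      have h0 : 72*(s:ℝ)*r = 9*m/10 := by rw [hrdef]; field_simp; ring
      have h1 : (M - 7*m/10) ≤ 72*(s:ℝ)*r := by rw [h0]; linarith [mul_le_mul_of_nonneg_right hs2b hm0.le]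
      have h2 : (M - 7*m/10)/r ≤ 72*(s:ℝ) := by
        rw [div_le_iff₀ hrpos]; linarith
      rw [hbdef]; linarith
    have hjκ : ∀ j : ℕ, j ≤ 8*s → (j:ℝ)*κ ≤ 3*m/10 := by
      intro j hj
      have hc : (j:ℝ) ≤ 8*(s:ℝ) := by
        have h' : ((j:ℕ):ℝ) ≤ ((8*s:ℕ):ℝ) := Nat.cast_le.mpr hj
        push_cast at h'; linarith
      have h8 : (8*(s:ℝ))*κ = 3*m/10 := by rw [hκdef, hrdef]; field_simp; ring
      nlinarith
    -- bounds valid at any time point in the interval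
    have hfacts : ∀ t : ℝ, 0 ≤ t →
        (5*(δ t)*(s:ℝ) ≤ 1 ∧ 4 ≤ 5*(1/(s:ℝ) - δ t)*(s:ℝ)) := by
      intro t ht
      have hd2 := (hδb t ht).2
      have hd2' : δ t * (s:ℝ) ≤ 0.2 := (le_div_iff₀ hSpos).mp hd2
      have hexp : (1/(s:ℝ) - δ t)*(s:ℝ) = 1 - δ t*(s:ℝ) := by field_simp
      constructor
      · nlinarith
      · nlinarith [hexp]
    -- the barrier
    have hbar : ∀ t ∈ Set.Icc t₀ b, ∀ i ≤ 8*s,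
        m + r*(t - t₀) ≤ (fun j u => if j = 0 then ξ u else ηj j u + (j:ℝ)*κ) i t := by
      apply slopeBarrier (8*s) _ t₀ b m r hbt
      · -- continuity
        intro i hi t ht
        have ht0 : (0:ℝ) ≤ t := le_trans ht₀ ht.1
        rcases Nat.eq_zero_or_pos i with h0 | h1
        · subst h0
          have he : (fun u' => if (0:ℕ) = 0 then ξ u' else ηj 0 u' + ((0:ℕ):ℝ)*κ) = ξ := by
            funext v; simp
          show ContinuousWithinAt (fun u' => if (0:ℕ) = 0 then ξ u' else ηj 0 u' + ((0:ℕ):ℝ)*κ) (Set.Icc t₀ b) t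
          rw [he]
          exact (hξd t ht0 _ rfl).continuousAt.continuousWithinAt
        · have hne : i ≠ 0 := by omega
          have he : (fun u' => if i = 0 then ξ u' else ηj i u' + (i:ℝ)*κ)
              = (fun v => ηj i v + (i:ℝ)*κ) := by
            funext v; simp [hne]
          show ContinuousWithinAt (fun u' => if i = 0 then ξ u' else ηj i u' + (i:ℝ)*κ) (Set.Icc t₀ b) t
          rw [he]
          rcases eq_or_lt_of_le (show 1 ≤ i from h1) with h1' | h2
          · rw [← h1']
            exact (((hη1d t ht0 _ _ rfl rfl).add_const _)).continuousAt.continuousWithinAt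
          · exact (((hηjd i h2 hi t ht0 _ _ rfl rfl).add_const _)).continuousAt.continuousWithinAt
      · -- initial values
        intro i hi
        rcases Nat.eq_zero_or_pos i with h0 | h1
        · subst h0; simpa using hΦleξ t₀
        · have hne : i ≠ 0 := by omega
          simp only [hne, if_false]
          have h2 := hΦleη t₀ i h1 hi
          have h3 : 0 ≤ (i:ℝ)*κ := by positivity
          linarith
      · -- contact condition
        intro t ht hgoodAll i hi hVi
        have ht0 : (0:ℝ) ≤ t := le_trans ht₀ ht.1
        have hD := hδlt t ht0
        have hG1 := hΓlb t ht0
        have hG2 := (hΓb t ht0).2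
        obtain ⟨hf1, hf2⟩ := hfacts t ht0
        have hd0 := (hδb t ht0).1
        -- bounds on the contact value x
        have hx1 : m ≤ m + r*(t - t₀) := by nlinarith [ht.1]
        have hx2 : m + r*(t - t₀) ≤ M + 3*m/10 := by
          have h1 : r*(t - t₀) ≤ r*(b - t₀) :=
            mul_le_mul_of_nonneg_left (by linarith [ht.2]) hrpos.le
          rw [hrb] at h1; linarith
        rcases Nat.eq_zero_or_pos i with h0 | hipos
        · -- i = 0 : the ξ coordinate
          subst h0
          simp only [if_pos] at hVi
          -- lower bound on the average advantage e
          have hηlb : ∀ j, 1 ≤ j → j ≤ 8*s → m + r*(t - t₀) - 3*m/10 ≤ ηj j t := by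
            intro j h1 h2
            have hg := hgoodAll j h2
            have hne : j ≠ 0 := by omega
            simp only [hne, if_false] at hg
            have h3 := hjκ j h2
            linarith
          have hsum : Γ t - 2*B t = ∑ j ∈ Finset.Icc 1 (8*s), (γ j t - 2*β j t) := by
            rw [hΓ, hB, Finset.mul_sum, ← Finset.sum_sub_distrib]
          have hsumge : (m + r*(t - t₀) - 3*m/10) * Γ t ≤ Γ t - 2*B t := by
            rw [hsum, hΓ, Finset.mul_sum]
            apply Finset.sum_le_sum
            intro j hj
            obtain ⟨hj1, hj2⟩ := Finset.mem_Icc.mp hj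
            have hg := hγpos t ht0 j hj1 hj2
            have h4 := hηlb j hj1 hj2
            rw [hηj j hj1 hj2 t] at h4
            calc (m + r*(t - t₀) - 3*m/10) * γ j t
                ≤ ((γ j t - 2*β j t)/γ j t) * γ j t :=
                  mul_le_mul_of_nonneg_right h4 hg.le
              _ = γ j t - 2*β j t := by field_simp
          have he : (m + r*(t - t₀)) - 3*m/10 ≤ (Γ t - 2*B t)/Γ t := by
            rw [le_div_iff₀ (hΓpos t ht0)]
            linarith [hsumge]
          refine ⟨_, hξd t ht0 (ξ t) (hξ t), ?_⟩
          rw [hVi, hrdef]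
          exact aux0 (s:ℝ) m (m + r*(t-t₀)) ((Γ t - 2*B t)/Γ t) (Γ t) (δ t) (1/(s:ℝ) - δ t)
            hS32 hm0 hmhalf hx1 (by linarith) (by linarith [he]) hG1 hG2 hd0 hf1 hf2 hD
        · -- i ≥ 1
          have hne : i ≠ 0 := by omega
          simp only [hne, if_false] at hVi
          rcases eq_or_lt_of_le (show 1 ≤ i from hipos) with h1' | h2
          · -- i = 1
            rw [← h1'] at hVi hi ⊢
            have hg0 := hgoodAll 0 (Nat.zero_le _)
            simp only [if_pos] at hg0
            have hg1 := hγpos t ht0 1 le_rfl h8s1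
            have hγ1 := hγ1b t ht0
            have hγ1' : γ 1 t * (s:ℝ) ≤ 1 := by
              have := (le_div_iff₀ hSpos).mp hγ1
              linarith [this]
            have he : (fun u' => if (1:ℕ) = 0 then ξ u' else ηj 1 u' + ((1:ℕ):ℝ)*κ)
                = (fun v => ηj 1 v + ((1:ℕ):ℝ)*κ) := by
              funext v; simp
            show ∃ vv, HasDerivAt (fun u' => if (1:ℕ) = 0 then ξ u' else ηj 1 u' + ((1:ℕ):ℝ)*κ) vv t ∧ r < vv
            rw [he]
            refine ⟨_, (hη1d t ht0 (ξ t) (ηj 1 t) (hξ t) (hηj 1 le_rfl h8s1 t)).add_const (((1:ℕ):ℝ)*κ), ?_⟩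
            rw [hrdef]
            apply aux1 (s:ℝ) m (m + r*(t-t₀)) (ξ t) (ηj 1 t) (Γ t) (1/(s:ℝ) - δ t) (γ 1 t)
              hS32 hm0 hg0 ?_ hG1 hf2 hD hg1 hγ1'
            have hcast1 : ((1:ℕ):ℝ) = 1 := by norm_num
            rw [hκdef, hrdef] at hVi
            push_cast at hVi
            linarith
          · -- i ≥ 2
            have hgprev := hgoodAll (i-1) (by omega)
            have hneprev : i - 1 ≠ 0 := by omega
            simp only [hneprev, if_false] at hgprev
            have hcast : ((i-1:ℕ):ℝ) = (i:ℝ) - 1 := by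
              rw [Nat.cast_sub (by omega : 1 ≤ i)]; norm_num
            have hgap : 3*r ≤ ηj (i-1) t - ηj i t := by
              rw [hcast] at hgprev
              rw [← hκdef]
              nlinarith [hgprev, hVi, hκpos]
            have hratio := hγratio t ht0 i h2 hi
            have hne2 : i ≠ 0 := by omega
            have he : (fun u' => if i = 0 then ξ u' else ηj i u' + (i:ℝ)*κ)
                = (fun v => ηj i v + (i:ℝ)*κ) := by
              funext v; simp [hne2]
            show ∃ vv, HasDerivAt (fun u' => if i = 0 then ξ u' else ηj i u' + (i:ℝ)*κ) vv t ∧ r < vv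
            rw [he]
            refine ⟨_, (hηjd i h2 hi t ht0 _ _ (hηj (i-1) (by omega) (by omega) t)
              (hηj i (by omega) hi t)).add_const ((i:ℝ)*κ), ?_⟩
            exact auxj r _ _ hrpos hratio hgap
    -- conclude the step
    have hVb := hbar b ⟨hbt, le_refl b⟩
    have hξb : M ≤ ξ b := by
      have h1 := hVb 0 (Nat.zero_le _)
      simp only [if_pos] at h1
      rw [hrb] at h1
      linarith
    have hηb : ∀ j, 1 ≤ j → j ≤ 8*s → M ≤ ηj j b := by
      intro j h1 h2
      have hne : j ≠ 0 := by omega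
      have h3 := hVb j h2
      simp only [hne, if_false] at h3
      rw [hrb] at h3
      have h4 := hjκ j h2
      linarith
    have hΦb : M ≤ Φ b := hΦge b M hξb hηb
    have hb0 : (0:ℝ) ≤ b := le_trans ht₀ hbt
    have h72 : (0:ℝ) ≤ t₀ + 72*(s:ℝ) := by nlinarith
    have hmono' := hmono (Set.mem_Ici.mpr hb0) (Set.mem_Ici.mpr h72) hb72
    exact le_trans hΦb hmono'
  -- iterate the step
  have key : ∀ n : ℕ, min (ρ * Real.sqrt 2 ^ n) (1/2 : ℝ) ≤ Φ (72*(s:ℝ)*n) := by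
    intro n
    induction n with
    | zero =>
      simp only [pow_zero, mul_one, Nat.cast_zero, mul_zero, hΦ0]
      exact min_le_left _ _
    | succ n ih =>
      have hn0 : (0:ℝ) ≤ 72*(s:ℝ)*n := by positivity
      have hcast : 72*(s:ℝ)*((n:ℕ)+1 : ℕ) = 72*(s:ℝ)*n + 72*(s:ℝ) := by push_cast; ring
      have hn1 : (0:ℝ) ≤ 72*(s:ℝ)*((n:ℕ)+1 : ℕ) := by rw [hcast]; nlinarith
      by_cases hc : (1/2:ℝ) ≤ Φ (72*(s:ℝ)*n)
      · refine le_trans (min_le_right _ _) (le_trans hc ?_)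
        apply hmono (Set.mem_Ici.mpr hn0) (Set.mem_Ici.mpr hn1)
        rw [hcast]; nlinarith
      · push_neg at hc
        have hm0 : 0 < Φ (72*(s:ℝ)*n) := by
          have h1 := hmono (Set.mem_Ici.mpr (le_refl (0:ℝ))) (Set.mem_Ici.mpr hn0) hn0
          rw [hΦ0] at h1
          linarith
        have hstep := step (72*(s:ℝ)*n) hn0 hc hm0
        have hΦn : ρ * Real.sqrt 2 ^ n ≤ Φ (72*(s:ℝ)*n) := by
          rcases le_or_gt (ρ * Real.sqrt 2 ^ n) (1/2:ℝ) with h | h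
          · rw [min_eq_left h] at ih; exact ih
          · rw [min_eq_right h.le] at ih; linarith
        calc min (ρ * Real.sqrt 2 ^ (n+1)) (1/2:ℝ)
            ≤ min (Real.sqrt 2 * Φ (72*(s:ℝ)*n)) (1/2:ℝ) := by
              apply min_le_min _ (le_refl _)
              rw [pow_succ]
              nlinarith [hΦn, Real.sqrt_nonneg 2]
          _ ≤ Φ (72*(s:ℝ)*n + 72*(s:ℝ)) := hstep
          _ = Φ (72*(s:ℝ)*((n:ℕ)+1 : ℕ)) := by rw [hcast]
  -- final assembly
  set Lg := Real.logb 2 (1/ρ) with hLgdef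
  have hLg1 : 1 < Lg := by
    have h1 : Real.logb 2 2 < Real.logb 2 (1/ρ) := by
      apply Real.logb_lt_logb (by norm_num) (by norm_num)
      rw [lt_div_iff₀ hρ]; linarith
    rw [Real.logb_self_eq_one (by norm_num)] at h1
    rw [hLgdef]; exact h1
  have h2L : (2:ℝ) ≤ 2*Lg := by linarith
  have hfl2 : 2 ≤ ⌊2*Lg⌋₊ := Nat.le_floor (by push_cast; linarith)
  set n := ⌊2*Lg⌋₊ - 1 with hndef
  have hncast : (n:ℝ) = (⌊2*Lg⌋₊:ℝ) - 1 := by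
    rw [hndef, Nat.cast_sub (by omega)]; norm_num
  have hfl_le : (⌊2*Lg⌋₊:ℝ) ≤ 2*Lg := Nat.floor_le (by linarith)
  have hfl_gt : 2*Lg < (⌊2*Lg⌋₊:ℝ) + 1 := Nat.lt_floor_add_one _
  have hmain := key n
  have hpow : (1/2:ℝ) ≤ ρ * Real.sqrt 2 ^ n := by
    have h1 : Real.sqrt 2 ^ n = (2:ℝ) ^ ((n:ℝ)/2) := by
      rw [Real.sqrt_eq_rpow, ← Real.rpow_natCast ((2:ℝ)^((1/2):ℝ)) n,
        ← Real.rpow_mul (by norm_num : (0:ℝ) ≤ 2)]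
      congr 1; ring
    have h2 : (2:ℝ)^(Lg - 1) ≤ (2:ℝ)^((n:ℝ)/2) := by
      apply (Real.rpow_le_rpow_left_iff (by norm_num : (1:ℝ) < 2)).mpr
      rw [hncast]; linarith
    have h3 : (2:ℝ)^(Lg - 1) = (1/ρ)/2 := by
      rw [Real.rpow_sub (by norm_num), Real.rpow_one, hLgdef,
        Real.rpow_logb (by norm_num) (by norm_num) (by positivity)]
    rw [h1]
    calc (1/2:ℝ) = ρ * ((1/ρ)/2) := by field_simp
      _ = ρ * (2:ℝ)^(Lg-1) := by rw [h3]
      _ ≤ ρ * (2:ℝ)^((n:ℝ)/2) := mul_le_mul_of_nonneg_left h2 hρ.le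
  have hΦn : (1/2:ℝ) ≤ Φ (72*(s:ℝ)*n) := le_trans (le_min hpow (le_refl _)) hmain
  have hnn : (0:ℝ) ≤ 72*(s:ℝ)*n := by positivity
  have htstar : 72*(s:ℝ)*n ≤ 144*(s:ℝ)*Lg := by
    have h1 : (n:ℝ) ≤ 2*Lg - 1 := by rw [hncast]; linarith
    nlinarith
  have htstar0 : (0:ℝ) ≤ 144*(s:ℝ)*Lg := by nlinarith
  exact le_trans hΦn (hmono (Set.mem_Ici.mpr hnn) (Set.mem_Ici.mpr htstar0) htstar)
end
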